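/- arXiv:2305.05017 — 4 statements merged into one kernel-verified Lean document; each statement's English description precedes it below -/
import Mathlib

section
/- Fix z, z' ∈ {0,1} with z ≠ z'. Assume Assumption (1) and Assumption (3), and fix v ∈ 𝒱 and c ∈ 𝒞 such that P(V_z = v, Z = z, C = c) > 0 and such that P(V_{z'} = v', Z = z', C = c) > 0 for every v' ∈ 𝒱. Then for every m' ∈ ℳ: P(M_{z'} = m' | V_z = v, Z = z, C = c) = Σ_{v' ∈ 𝒱} P(M_{z'} = m' | V_{z'} = v', Z = z', C = c) · P(V_{z'} = v' | V_z = v, Z = z, C = c). -/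
open MeasureTheory ProbabilityTheory

/-- Conditional probability `P(A | B) = P(A ∩ B) / P(B)`. -/
noncomputable def cProb {Ω : Type*} [MeasurableSpace Ω] (P : Measure Ω) (A B : Set Ω) : ℝ :=
  (P (A ∩ B)).toReal / (P B).toReal

lemma cond_factor {a q p s : ℝ} (hs : s ≠ 0) (h : a / s = q / s * (p / s)) :
    a * s = q * p := by
  have h1 : a * s = (a / s) * (s * s) := by field_simp
  rw [h1, h]; field_simp

lemma slice_sum {Ω α : Type*} [MeasurableSpace Ω] [Fintype α] [MeasurableSpace α]
    [MeasurableSingletonClass α]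
    (P : Measure Ω) [IsProbabilityMeasure P] (f : Ω → α) (hf : Measurable f)
    (S : Set Ω) (hS : MeasurableSet S) :
    ∑ a : α, (P ({ω | f ω = a} ∩ S)).toReal = (P S).toReal := by
  have hU : S = ⋃ a, ({ω | f ω = a} ∩ S) := by ext ω; simp
  have hd : Pairwise (Function.onFun Disjoint fun a => ({ω | f ω = a} ∩ S)) := by
    intro a b hab
    simp only [Function.onFun, Set.disjoint_left]
    rintro ω ⟨ha, _⟩ ⟨hb, _⟩
    exact hab (ha.symm.trans hb)
  have hm : ∀ a, MeasurableSet ({ω | f ω = a} ∩ S) := fun a =>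
    (hf (measurableSet_singleton a)).inter hS
  have h2 : P S = ∑' a, P ({ω | f ω = a} ∩ S) := by
    conv_lhs => rw [hU]
    exact measure_iUnion hd hm
  rw [h2, tsum_fintype, ENNReal.toReal_sum (fun a _ => measure_ne_top P _)]

/-- Theorem 3.1 of the paper (finite-valued version): under ignorable treatment assignment
given baseline confounders (Assumption (1)) and conditional cross-world independence between
the post-treatment confounder and the mediator (Assumption (3)), the cross-world mediator
distribution is identified by marginalizing over the conditional distribution of `V_{z'}`
given `V_z`. -/
theorem crossworld_mediator_identification
    {Ω 𝒱 ℳ 𝒞 : Type*} [MeasurableSpace Ω]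
    [Fintype 𝒱] [MeasurableSpace 𝒱] [MeasurableSingletonClass 𝒱]
    [Fintype ℳ] [MeasurableSpace ℳ] [MeasurableSingletonClass ℳ]
    [Fintype 𝒞] [MeasurableSpace 𝒞] [MeasurableSingletonClass 𝒞]
    (P : Measure Ω) [IsProbabilityMeasure P]
    (Z : Ω → Bool) (C : Ω → 𝒞) (V : Bool → Ω → 𝒱) (M : Bool → Ω → ℳ)
    (hZ : Measurable Z) (hC : Measurable C)
    (hV : ∀ zb, Measurable (V zb)) (hM : ∀ zb, Measurable (M zb))
    (z z' : Bool) (hzz' : z ≠ z')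
    -- Assumption (1): ignorable treatment assignment given baseline confounders
    (h1 : ∀ (za zb : Bool) (m₂ : ℳ) (v₁ v₂ : 𝒱) (z'' : Bool) (c : 𝒞),
      0 < P {ω | C ω = c} →
      cProb P {ω | M zb ω = m₂ ∧ V za ω = v₁ ∧ V zb ω = v₂ ∧ Z ω = z''} {ω | C ω = c}
        = cProb P {ω | M zb ω = m₂ ∧ V za ω = v₁ ∧ V zb ω = v₂} {ω | C ω = c}
          * cProb P {ω | Z ω = z''} {ω | C ω = c})
    -- Assumption (3): conditional cross-world independence of `V_z` and `M_{z'}`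
    (h3 : ∀ (v' : 𝒱) (c : 𝒞),
      0 < P {ω | V z' ω = v' ∧ Z ω = z' ∧ C ω = c} →
      ∀ (m' : ℳ) (v : 𝒱),
      cProb P {ω | M z' ω = m' ∧ V z ω = v} {ω | V z' ω = v' ∧ Z ω = z' ∧ C ω = c}
        = cProb P {ω | M z' ω = m'} {ω | V z' ω = v' ∧ Z ω = z' ∧ C ω = c}
          * cProb P {ω | V z ω = v} {ω | V z' ω = v' ∧ Z ω = z' ∧ C ω = c})
    (v : 𝒱) (c : 𝒞)
    (hpos : 0 < P {ω | V z ω = v ∧ Z ω = z ∧ C ω = c})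
    (hpos' : ∀ v' : 𝒱, 0 < P {ω | V z' ω = v' ∧ Z ω = z' ∧ C ω = c}) :
    ∀ m' : ℳ,
      cProb P {ω | M z' ω = m'} {ω | V z ω = v ∧ Z ω = z ∧ C ω = c}
        = ∑ v' : 𝒱,
            cProb P {ω | M z' ω = m'} {ω | V z' ω = v' ∧ Z ω = z' ∧ C ω = c}
              * cProb P {ω | V z' ω = v'} {ω | V z ω = v ∧ Z ω = z ∧ C ω = c} := by
  intro m'
  -- measurable-set helpers
  have mV : ∀ (zb : Bool) (x : 𝒱), MeasurableSet {ω | V zb ω = x} :=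
    fun zb x => hV zb (measurableSet_singleton x)
  have mM : ∀ (zb : Bool) (x : ℳ), MeasurableSet {ω | M zb ω = x} :=
    fun zb x => hM zb (measurableSet_singleton x)
  have mZ : ∀ (x : Bool), MeasurableSet {ω | Z ω = x} :=
    fun x => hZ (measurableSet_singleton x)
  have mC : MeasurableSet {ω | C ω = c} := hC (measurableSet_singleton c)
  -- positivity
  have hCpos : 0 < P {ω | C ω = c} :=
    lt_of_lt_of_le hpos (measure_mono fun ω h => h.2.2)
  have hs : 0 < (P {ω | C ω = c}).toReal :=
    ENNReal.toReal_pos hCpos.ne' (measure_ne_top P _)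
  have hD : 0 < (P {ω | V z ω = v ∧ Z ω = z ∧ C ω = c}).toReal :=
    ENNReal.toReal_pos hpos.ne' (measure_ne_top P _)
  have hF : ∀ v' : 𝒱, 0 < (P {ω | V z' ω = v' ∧ Z ω = z' ∧ C ω = c}).toReal :=
    fun v' => ENNReal.toReal_pos (hpos' v').ne' (measure_ne_top P _)
  have hpz' : 0 < (P ({ω | Z ω = z'} ∩ {ω | C ω = c})).toReal := by
    refine ENNReal.toReal_pos ?_ (measure_ne_top P _)
    have hsub : {ω | V z' ω = v ∧ Z ω = z' ∧ C ω = c} ⊆ {ω | Z ω = z'} ∩ {ω | C ω = c} :=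
      fun ω h => ⟨h.2.1, h.2.2⟩
    exact (lt_of_lt_of_le (hpos' v) (measure_mono hsub)).ne'
  -- from assumption 1:
  have hA : ∀ (m : ℳ) (v' : 𝒱) (z'' : Bool),
      (P ({ω | M z' ω = m ∧ V z ω = v ∧ V z' ω = v' ∧ Z ω = z''} ∩ {ω | C ω = c})).toReal
        * (P {ω | C ω = c}).toReal
      = (P ({ω | M z' ω = m ∧ V z ω = v ∧ V z' ω = v'} ∩ {ω | C ω = c})).toReal
        * (P ({ω | Z ω = z''} ∩ {ω | C ω = c})).toReal := by
    intro m v' z''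
    exact cond_factor hs.ne' (h1 z z' m v v' z'' c hCpos)
  -- summed over m : B-version
  have hB : ∀ (v' : 𝒱) (z'' : Bool),
      (P ({ω | V z ω = v ∧ V z' ω = v' ∧ Z ω = z''} ∩ {ω | C ω = c})).toReal
        * (P {ω | C ω = c}).toReal
      = (P ({ω | V z ω = v ∧ V z' ω = v'} ∩ {ω | C ω = c})).toReal
        * (P ({ω | Z ω = z''} ∩ {ω | C ω = c})).toReal := by
    intro v' z''
    have e1 : ∑ m : ℳ,
        (P ({ω | M z' ω = m ∧ V z ω = v ∧ V z' ω = v' ∧ Z ω = z''} ∩ {ω | C ω = c})).toReal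
        = (P ({ω | V z ω = v ∧ V z' ω = v' ∧ Z ω = z''} ∩ {ω | C ω = c})).toReal := by
      rw [← slice_sum P (M z') (hM z')
        ({ω | V z ω = v ∧ V z' ω = v' ∧ Z ω = z''} ∩ {ω | C ω = c})
        ((((mV z v).inter ((mV z' v').inter (mZ z''))).inter mC))]
      refine Finset.sum_congr rfl fun m _ => ?_
      congr 2
      ext ω
      simp only [Set.mem_inter_iff, Set.mem_setOf_eq]
      tauto
    have e2 : ∑ m : ℳ,
        (P ({ω | M z' ω = m ∧ V z ω = v ∧ V z' ω = v'} ∩ {ω | C ω = c})).toReal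
        = (P ({ω | V z ω = v ∧ V z' ω = v'} ∩ {ω | C ω = c})).toReal := by
      rw [← slice_sum P (M z') (hM z')
        ({ω | V z ω = v ∧ V z' ω = v'} ∩ {ω | C ω = c})
        (((mV z v).inter (mV z' v')).inter mC)]
      refine Finset.sum_congr rfl fun m _ => ?_
      congr 2
      ext ω
      simp only [Set.mem_inter_iff, Set.mem_setOf_eq]
      tauto
    calc (P ({ω | V z ω = v ∧ V z' ω = v' ∧ Z ω = z''} ∩ {ω | C ω = c})).toReal
          * (P {ω | C ω = c}).toReal
        = ∑ m : ℳ,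
            (P ({ω | M z' ω = m ∧ V z ω = v ∧ V z' ω = v' ∧ Z ω = z''} ∩ {ω | C ω = c})).toReal
              * (P {ω | C ω = c}).toReal := by
          rw [← Finset.sum_mul, e1]
      _ = ∑ m : ℳ,
            (P ({ω | M z' ω = m ∧ V z ω = v ∧ V z' ω = v'} ∩ {ω | C ω = c})).toReal
              * (P ({ω | Z ω = z''} ∩ {ω | C ω = c})).toReal := by
          exact Finset.sum_congr rfl fun m _ => hA m v' z''
      _ = _ := by rw [← Finset.sum_mul, e2]
  -- from assumption 3 (cross-world independence), rephrased
  have h3' : ∀ v' : 𝒱,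
      (P ({ω | M z' ω = m' ∧ V z ω = v ∧ V z' ω = v' ∧ Z ω = z'} ∩ {ω | C ω = c})).toReal
        * (P {ω | V z' ω = v' ∧ Z ω = z' ∧ C ω = c}).toReal
      = (P ({ω | M z' ω = m'} ∩ {ω | V z' ω = v' ∧ Z ω = z' ∧ C ω = c})).toReal
        * (P ({ω | V z ω = v ∧ V z' ω = v' ∧ Z ω = z'} ∩ {ω | C ω = c})).toReal := by
    intro v'
    have key := cond_factor (hF v').ne' (h3 v' c (hpos' v') m' v)
    have e1 : P ({ω | M z' ω = m' ∧ V z ω = v} ∩ {ω | V z' ω = v' ∧ Z ω = z' ∧ C ω = c})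
        = P ({ω | M z' ω = m' ∧ V z ω = v ∧ V z' ω = v' ∧ Z ω = z'} ∩ {ω | C ω = c}) := by
      congr 1; ext ω; simp only [Set.mem_inter_iff, Set.mem_setOf_eq]; tauto
    have e2 : P ({ω | V z ω = v} ∩ {ω | V z' ω = v' ∧ Z ω = z' ∧ C ω = c})
        = P ({ω | V z ω = v ∧ V z' ω = v' ∧ Z ω = z'} ∩ {ω | C ω = c}) := by
      congr 1; ext ω; simp only [Set.mem_inter_iff, Set.mem_setOf_eq]; tauto
    rw [e1, e2] at key
    exact key
  -- key per-v' identity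
  have key : ∀ v' : 𝒱,
      (P ({ω | M z' ω = m' ∧ V z ω = v ∧ V z' ω = v' ∧ Z ω = z} ∩ {ω | C ω = c})).toReal
        * (P {ω | V z' ω = v' ∧ Z ω = z' ∧ C ω = c}).toReal
      = (P ({ω | M z' ω = m'} ∩ {ω | V z' ω = v' ∧ Z ω = z' ∧ C ω = c})).toReal
        * (P ({ω | V z ω = v ∧ V z' ω = v' ∧ Z ω = z} ∩ {ω | C ω = c})).toReal := by
    intro v'
    have ha1 := hA m' v' z
    have ha2 := hA m' v' z'
    have hb1 := hB v' z
    have hb2 := hB v' z'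
    have h3v := h3' v'
    have hcancel : (P {ω | C ω = c}).toReal * (P ({ω | Z ω = z'} ∩ {ω | C ω = c})).toReal ≠ 0 :=
      (mul_pos hs hpz').ne'
    apply mul_right_cancel₀ hcancel
    set a1 := (P ({ω | M z' ω = m' ∧ V z ω = v ∧ V z' ω = v' ∧ Z ω = z} ∩ {ω | C ω = c})).toReal
    set a2 := (P ({ω | M z' ω = m' ∧ V z ω = v ∧ V z' ω = v' ∧ Z ω = z'} ∩ {ω | C ω = c})).toReal
    set b1 := (P ({ω | V z ω = v ∧ V z' ω = v' ∧ Z ω = z} ∩ {ω | C ω = c})).toReal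
    set b2 := (P ({ω | V z ω = v ∧ V z' ω = v' ∧ Z ω = z'} ∩ {ω | C ω = c})).toReal
    set q := (P ({ω | M z' ω = m' ∧ V z ω = v ∧ V z' ω = v'} ∩ {ω | C ω = c})).toReal
    set r := (P ({ω | V z ω = v ∧ V z' ω = v'} ∩ {ω | C ω = c})).toReal
    set s := (P {ω | C ω = c}).toReal
    set p1 := (P ({ω | Z ω = z} ∩ {ω | C ω = c})).toReal
    set p2 := (P ({ω | Z ω = z'} ∩ {ω | C ω = c})).toReal
    set f := (P {ω | V z' ω = v' ∧ Z ω = z' ∧ C ω = c}).toReal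
    set e := (P ({ω | M z' ω = m'} ∩ {ω | V z' ω = v' ∧ Z ω = z' ∧ C ω = c})).toReal
    linear_combination (f * p2) * ha1 - (e * p2) * hb1 - (p1 * f) * ha2 + (p1 * e) * hb2
      + (p1 * s) * h3v
  -- assemble the goal
  simp only [cProb]
  have eN : ∑ v' : 𝒱,
      (P ({ω | M z' ω = m' ∧ V z ω = v ∧ V z' ω = v' ∧ Z ω = z} ∩ {ω | C ω = c})).toReal
      = (P ({ω | M z' ω = m'} ∩ {ω | V z ω = v ∧ Z ω = z ∧ C ω = c})).toReal := by
    rw [← slice_sum P (V z') (hV z')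
      ({ω | M z' ω = m'} ∩ {ω | V z ω = v ∧ Z ω = z ∧ C ω = c})
      ((mM z' m').inter (((mV z v).inter ((mZ z).inter mC))))]
    refine Finset.sum_congr rfl fun v' _ => ?_
    congr 2; ext ω; simp only [Set.mem_inter_iff, Set.mem_setOf_eq]; tauto
  have eB : ∀ v' : 𝒱,
      P ({ω | V z' ω = v'} ∩ {ω | V z ω = v ∧ Z ω = z ∧ C ω = c})
      = P ({ω | V z ω = v ∧ V z' ω = v' ∧ Z ω = z} ∩ {ω | C ω = c}) := by
    intro v'
    congr 1; ext ω; simp only [Set.mem_inter_iff, Set.mem_setOf_eq]; tauto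
  rw [← eN, Finset.sum_div]
  refine Finset.sum_congr rfl fun v' _ => ?_
  rw [eB v']
  rw [div_mul_div_comm]
  rw [div_eq_div_iff hD.ne' (mul_pos (hF v') hD).ne']
  linear_combination (P {ω | V z ω = v ∧ Z ω = z ∧ C ω = c}).toReal * key v'
end

section
/- Fix z, z' ∈ {0,1} with z ≠ z'. Assume Assumptions (1), (2) and (3), and fix v ∈ 𝒱 and c ∈ 𝒞 such that P(V_z = v, Z = z, C = c) > 0, such that P(V_{z'} = v', Z = z', C = c) > 0 for every v' ∈ 𝒱, and such that P(M_z = m', V_z = v, Z = z, C = c) > 0 for every m' ∈ ℳ. Then E[Y_{z,M_{z'}} | V_z = v, C = c] = Σ_{v' ∈ 𝒱} Σ_{m' ∈ ℳ} E[Y_{z,m'} | M_z = m', V_z = v, Z = z, C = c] · P(M_{z'} = m' | V_{z'} = v', Z = z', C = c) · P(V_{z'} = v' | V_z = v, Z = z, C = c). -/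
open MeasureTheory ProbabilityTheory

/-- Conditional expectation `E[X | B] = E[X · 1_B] / P(B)`. -/
noncomputable def cExp {Ω : Type*} [MeasurableSpace Ω] (P : Measure Ω) (X : Ω → ℝ)
    (B : Set Ω) : ℝ :=
  (∫ ω in B, X ω ∂P) / (P B).toReal

private lemma key_integral {Ω : Type*} [MeasurableSpace Ω] (P : Measure Ω) [IsFiniteMeasure P]
    (Y : Ω → ℝ) (hY : Measurable Y) (S₁ S₂ : Set Ω) (a b : ℝ) (ha : 0 ≤ a) (hb : 0 ≤ b)
    (h : ∀ A : Set ℝ, MeasurableSet A →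
      b * (P (Y ⁻¹' A ∩ S₁)).toReal = a * (P (Y ⁻¹' A ∩ S₂)).toReal) :
    b * ∫ ω in S₁, Y ω ∂P = a * ∫ ω in S₂, Y ω ∂P := by
  have hmeq : (ENNReal.ofReal b) • ((P.restrict S₁).map Y)
      = (ENNReal.ofReal a) • ((P.restrict S₂).map Y) := by
    ext A hA
    have e₁ : ((P.restrict S₁).map Y) A = P (Y ⁻¹' A ∩ S₁) := by
      rw [Measure.map_apply hY hA, Measure.restrict_apply (hY hA)]
    have e₂ : ((P.restrict S₂).map Y) A = P (Y ⁻¹' A ∩ S₂) := by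
      rw [Measure.map_apply hY hA, Measure.restrict_apply (hY hA)]
    simp only [Measure.smul_apply, smul_eq_mul, e₁, e₂]
    rw [← ENNReal.ofReal_toReal (measure_ne_top P (Y ⁻¹' A ∩ S₁)),
      ← ENNReal.ofReal_toReal (measure_ne_top P (Y ⁻¹' A ∩ S₂)),
      ← ENNReal.ofReal_mul hb, ← ENNReal.ofReal_mul ha, h A hA]
  have h2 := congrArg (fun μ : Measure ℝ => ∫ x, x ∂μ) hmeq
  simp only [integral_smul_measure] at h2
  have e₁ : ∫ x : ℝ, x ∂((P.restrict S₁).map Y) = ∫ ω in S₁, Y ω ∂P :=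
    integral_map hY.aemeasurable aestronglyMeasurable_id
  have e₂ : ∫ x : ℝ, x ∂((P.restrict S₂).map Y) = ∫ ω in S₂, Y ω ∂P :=
    integral_map hY.aemeasurable aestronglyMeasurable_id
  rw [e₁, e₂, ENNReal.toReal_ofReal ha, ENNReal.toReal_ofReal hb, smul_eq_mul, smul_eq_mul] at h2
  exact h2

private lemma pr_sum_fiber {Ω α : Type*} [MeasurableSpace Ω] [Fintype α] [MeasurableSpace α]
    [MeasurableSingletonClass α] (P : Measure Ω) [IsFiniteMeasure P]
    {g : Ω → α} (hg : Measurable g) {T : Set Ω} (hT : MeasurableSet T) :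
    (P T).toReal = ∑ a : α, (P ({ω | g ω = a} ∩ T)).toReal := by
  have hdis : Pairwise (Function.onFun Disjoint fun a : α => {ω | g ω = a} ∩ T) := by
    intro a b hab
    simp only [Function.onFun, Set.disjoint_left]
    rintro ω ⟨ha, -⟩ ⟨hb, -⟩
    exact hab (ha ▸ hb ▸ rfl)
  have hmeas : ∀ a : α, MeasurableSet ({ω | g ω = a} ∩ T) := fun a =>
    (hg (measurableSet_singleton a)).inter hT
  have hT' : T = ⋃ a : α, ({ω | g ω = a} ∩ T) := by ext ω; simp
  have h0 : P T = ∑' a, P ({ω | g ω = a} ∩ T) := by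
    conv_lhs => rw [hT']
    exact measure_iUnion hdis hmeas
  rw [h0, tsum_fintype, ENNReal.toReal_sum (fun a _ => measure_ne_top _ _)]

private lemma cProb_mul_helper {a b d p : ℝ} (hp : 0 < p) (h : a / p = b / p * (d / p)) :
    a * p = b * d := by
  field_simp at h
  apply mul_right_cancel₀ hp.ne'
  linear_combination p * h

/-- Theorem 3.2 of the paper (finite-valued version): under Assumptions (1), (2) and (3),
the cross-world mean `E[Y_{z, M_{z'}} | V_z = v, C = c]` is identified. -/
theorem crossworld_mean_identification
    {Ω 𝒱 ℳ 𝒞 : Type*} [MeasurableSpace Ω]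
    [Fintype 𝒱] [MeasurableSpace 𝒱] [MeasurableSingletonClass 𝒱]
    [Fintype ℳ] [MeasurableSpace ℳ] [MeasurableSingletonClass ℳ]
    [Fintype 𝒞] [MeasurableSpace 𝒞] [MeasurableSingletonClass 𝒞]
    (P : Measure Ω) [IsProbabilityMeasure P]
    (Z : Ω → Bool) (C : Ω → 𝒞) (V : Bool → Ω → 𝒱) (M : Bool → Ω → ℳ)
    (Y : Bool → ℳ → Ω → ℝ)
    (hZ : Measurable Z) (hC : Measurable C)
    (hV : ∀ zb, Measurable (V zb)) (hM : ∀ zb, Measurable (M zb))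
    (hYmeas : ∀ zb m, Measurable (Y zb m)) (hYint : ∀ zb m, Integrable (Y zb m) P)
    (z z' : Bool) (hzz' : z ≠ z')
    -- Assumption (1): ignorable treatment assignment given baseline confounders
    (h1 : ∀ (za zb : Bool) (m : ℳ), ∀ A : Set ℝ, MeasurableSet A →
      ∀ (m₁ m₂ : ℳ) (v₁ v₂ : 𝒱) (z'' : Bool) (c : 𝒞),
      0 < P {ω | C ω = c} →
      cProb P {ω | Y za m ω ∈ A ∧ M za ω = m₁ ∧ M zb ω = m₂ ∧ V za ω = v₁ ∧ V zb ω = v₂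
                    ∧ Z ω = z''} {ω | C ω = c}
        = cProb P {ω | Y za m ω ∈ A ∧ M za ω = m₁ ∧ M zb ω = m₂ ∧ V za ω = v₁ ∧ V zb ω = v₂}
            {ω | C ω = c}
          * cProb P {ω | Z ω = z''} {ω | C ω = c})
    -- Assumption (2): ignorable mediator value assignment given baseline confounders
    -- and the post-treatment confounder
    (h2 : ∀ (za zb : Bool) (m : ℳ) (v₀ : 𝒱) (c : 𝒞),
      0 < P {ω | V za ω = v₀ ∧ Z ω = za ∧ C ω = c} →
      ∀ A : Set ℝ, MeasurableSet A → ∀ (m₁ m₂ : ℳ),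
      cProb P {ω | Y za m ω ∈ A ∧ M za ω = m₁ ∧ M zb ω = m₂}
          {ω | V za ω = v₀ ∧ Z ω = za ∧ C ω = c}
        = cProb P {ω | Y za m ω ∈ A} {ω | V za ω = v₀ ∧ Z ω = za ∧ C ω = c}
          * cProb P {ω | M za ω = m₁ ∧ M zb ω = m₂} {ω | V za ω = v₀ ∧ Z ω = za ∧ C ω = c})
    -- Assumption (3): conditional cross-world independence of `V_z` and `M_{z'}`
    (h3 : ∀ (v' : 𝒱) (c : 𝒞),
      0 < P {ω | V z' ω = v' ∧ Z ω = z' ∧ C ω = c} →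
      ∀ (m' : ℳ) (v : 𝒱),
      cProb P {ω | M z' ω = m' ∧ V z ω = v} {ω | V z' ω = v' ∧ Z ω = z' ∧ C ω = c}
        = cProb P {ω | M z' ω = m'} {ω | V z' ω = v' ∧ Z ω = z' ∧ C ω = c}
          * cProb P {ω | V z ω = v} {ω | V z' ω = v' ∧ Z ω = z' ∧ C ω = c})
    (v : 𝒱) (c : 𝒞)
    (hpos : 0 < P {ω | V z ω = v ∧ Z ω = z ∧ C ω = c})
    (hpos' : ∀ v' : 𝒱, 0 < P {ω | V z' ω = v' ∧ Z ω = z' ∧ C ω = c})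
    (hposM : ∀ m' : ℳ, 0 < P {ω | M z ω = m' ∧ V z ω = v ∧ Z ω = z ∧ C ω = c}) :
    cExp P (fun ω => Y z (M z' ω) ω) {ω | V z ω = v ∧ C ω = c}
      = ∑ v' : 𝒱, ∑ m' : ℳ,
          cExp P (Y z m') {ω | M z ω = m' ∧ V z ω = v ∧ Z ω = z ∧ C ω = c}
            * cProb P {ω | M z' ω = m'} {ω | V z' ω = v' ∧ Z ω = z' ∧ C ω = c}
            * cProb P {ω | V z' ω = v'} {ω | V z ω = v ∧ Z ω = z ∧ C ω = c} := by
  classical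
  have fin : ∀ s : Set Ω, P s ≠ ⊤ := fun s => measure_ne_top P s
  have hPC : 0 < P {ω | C ω = c} := lt_of_lt_of_le hpos (measure_mono fun ω h => h.2.2)
  have hpC : 0 < (P {ω | C ω = c}).toReal := ENNReal.toReal_pos hPC.ne' (fin _)
  have hpD : 0 < (P {ω | V z ω = v ∧ Z ω = z ∧ C ω = c}).toReal :=
    ENNReal.toReal_pos hpos.ne' (fin _)
  have hsubB : {ω | V z ω = v ∧ Z ω = z ∧ C ω = c} ⊆ {ω | V z ω = v ∧ C ω = c} :=
    fun ω h => ⟨h.1, h.2.2⟩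
  have hsubZ : {ω | V z ω = v ∧ Z ω = z ∧ C ω = c} ⊆ {ω | Z ω = z ∧ C ω = c} :=
    fun ω h => ⟨h.2.1, h.2.2⟩
  have hsubZ' : {ω | V z' ω = v ∧ Z ω = z' ∧ C ω = c} ⊆ {ω | Z ω = z' ∧ C ω = c} :=
    fun ω h => ⟨h.2.1, h.2.2⟩
  have hpB : 0 < (P {ω | V z ω = v ∧ C ω = c}).toReal :=
    ENNReal.toReal_pos (lt_of_lt_of_le hpos (measure_mono hsubB)).ne' (fin _)
  have hpZz : 0 < (P {ω | Z ω = z ∧ C ω = c}).toReal :=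
    ENNReal.toReal_pos (lt_of_lt_of_le hpos (measure_mono hsubZ)).ne' (fin _)
  have hpZz' : 0 < (P {ω | Z ω = z' ∧ C ω = c}).toReal :=
    ENNReal.toReal_pos (lt_of_lt_of_le (hpos' v) (measure_mono hsubZ')).ne' (fin _)
  have hpE : ∀ v' : 𝒱, 0 < (P {ω | V z' ω = v' ∧ Z ω = z' ∧ C ω = c}).toReal := fun v' =>
    ENNReal.toReal_pos (hpos' v').ne' (fin _)
  have hpDm : ∀ m' : ℳ, 0 < (P {ω | M z ω = m' ∧ V z ω = v ∧ Z ω = z ∧ C ω = c}).toReal :=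
    fun m' => ENNReal.toReal_pos (hposM m').ne' (fin _)
  have msC : MeasurableSet {ω | C ω = c} := hC (measurableSet_singleton c)
  have msZ : ∀ b : Bool, MeasurableSet {ω | Z ω = b} := fun b => hZ (measurableSet_singleton b)
  have msVz : ∀ u : 𝒱, MeasurableSet {ω | V z ω = u} := fun u => hV z (measurableSet_singleton u)
  have msVz' : ∀ u : 𝒱, MeasurableSet {ω | V z' ω = u} :=
    fun u => hV z' (measurableSet_singleton u)
  have msMz : ∀ a : ℳ, MeasurableSet {ω | M z ω = a} := fun a => hM z (measurableSet_singleton a)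
  have msMz' : ∀ a : ℳ, MeasurableSet {ω | M z' ω = a} :=
    fun a => hM z' (measurableSet_singleton a)
  -- P1 : assumption 1, marginalized over the value of `M z`
  have P1 : ∀ A : Set ℝ, MeasurableSet A → ∀ (m m₂ : ℳ) (v₂ : 𝒱) (z'' : Bool),
      (P {ω | Y z m ω ∈ A ∧ M z' ω = m₂ ∧ V z ω = v ∧ V z' ω = v₂ ∧ Z ω = z'' ∧ C ω = c}).toReal
        * (P {ω | C ω = c}).toReal
      = (P {ω | Y z m ω ∈ A ∧ M z' ω = m₂ ∧ V z ω = v ∧ V z' ω = v₂ ∧ C ω = c}).toReal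
        * (P {ω | Z ω = z'' ∧ C ω = c}).toReal := by
    intro A hA m m₂ v₂ z''
    have msT₁ : MeasurableSet
        {ω | Y z m ω ∈ A ∧ M z' ω = m₂ ∧ V z ω = v ∧ V z' ω = v₂ ∧ Z ω = z'' ∧ C ω = c} :=
      (hYmeas z m hA).inter ((msMz' m₂).inter ((msVz v).inter ((msVz' v₂).inter
        ((msZ z'').inter msC))))
    have msT₂ : MeasurableSet
        {ω | Y z m ω ∈ A ∧ M z' ω = m₂ ∧ V z ω = v ∧ V z' ω = v₂ ∧ C ω = c} :=
      (hYmeas z m hA).inter ((msMz' m₂).inter ((msVz v).inter ((msVz' v₂).inter msC)))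
    rw [pr_sum_fiber P (hM z) msT₁, pr_sum_fiber P (hM z) msT₂, Finset.sum_mul, Finset.sum_mul]
    refine Finset.sum_congr rfl fun m₁ _ => ?_
    have h := h1 z z' m A hA m₁ m₂ v v₂ z'' c hPC
    rw [cProb, cProb, cProb] at h
    have h' := cProb_mul_helper hpC h
    have e₁ : {ω | Y z m ω ∈ A ∧ M z ω = m₁ ∧ M z' ω = m₂ ∧ V z ω = v ∧ V z' ω = v₂
          ∧ Z ω = z''} ∩ {ω | C ω = c}
        = {ω | M z ω = m₁} ∩
          {ω | Y z m ω ∈ A ∧ M z' ω = m₂ ∧ V z ω = v ∧ V z' ω = v₂ ∧ Z ω = z'' ∧ C ω = c} := by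
      ext ω; simp only [Set.mem_inter_iff, Set.mem_setOf_eq]; tauto
    have e₂ : {ω | Y z m ω ∈ A ∧ M z ω = m₁ ∧ M z' ω = m₂ ∧ V z ω = v ∧ V z' ω = v₂}
          ∩ {ω | C ω = c}
        = {ω | M z ω = m₁} ∩
          {ω | Y z m ω ∈ A ∧ M z' ω = m₂ ∧ V z ω = v ∧ V z' ω = v₂ ∧ C ω = c} := by
      ext ω; simp only [Set.mem_inter_iff, Set.mem_setOf_eq]; tauto
    have e₃ : {ω | Z ω = z''} ∩ {ω | C ω = c} = {ω | Z ω = z'' ∧ C ω = c} := rfl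
    rw [e₁, e₂, e₃] at h'
    exact h'
  -- V1 : P1 further marginalized over the value of `V z'`
  have V1 : ∀ A : Set ℝ, MeasurableSet A → ∀ (m m₂ : ℳ) (z'' : Bool),
      (P {ω | Y z m ω ∈ A ∧ M z' ω = m₂ ∧ V z ω = v ∧ Z ω = z'' ∧ C ω = c}).toReal
        * (P {ω | C ω = c}).toReal
      = (P {ω | Y z m ω ∈ A ∧ M z' ω = m₂ ∧ V z ω = v ∧ C ω = c}).toReal
        * (P {ω | Z ω = z'' ∧ C ω = c}).toReal := by
    intro A hA m m₂ z''
    have msT₁ : MeasurableSet {ω | Y z m ω ∈ A ∧ M z' ω = m₂ ∧ V z ω = v ∧ Z ω = z'' ∧ C ω = c} :=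
      (hYmeas z m hA).inter ((msMz' m₂).inter ((msVz v).inter ((msZ z'').inter msC)))
    have msT₂ : MeasurableSet {ω | Y z m ω ∈ A ∧ M z' ω = m₂ ∧ V z ω = v ∧ C ω = c} :=
      (hYmeas z m hA).inter ((msMz' m₂).inter ((msVz v).inter msC))
    rw [pr_sum_fiber P (hV z') msT₁, pr_sum_fiber P (hV z') msT₂, Finset.sum_mul, Finset.sum_mul]
    refine Finset.sum_congr rfl fun v₂ _ => ?_
    have e₁ : {ω | V z' ω = v₂} ∩
          {ω | Y z m ω ∈ A ∧ M z' ω = m₂ ∧ V z ω = v ∧ Z ω = z'' ∧ C ω = c}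
        = {ω | Y z m ω ∈ A ∧ M z' ω = m₂ ∧ V z ω = v ∧ V z' ω = v₂ ∧ Z ω = z'' ∧ C ω = c} := by
      ext ω; simp only [Set.mem_inter_iff, Set.mem_setOf_eq]; tauto
    have e₂ : {ω | V z' ω = v₂} ∩ {ω | Y z m ω ∈ A ∧ M z' ω = m₂ ∧ V z ω = v ∧ C ω = c}
        = {ω | Y z m ω ∈ A ∧ M z' ω = m₂ ∧ V z ω = v ∧ V z' ω = v₂ ∧ C ω = c} := by
      ext ω; simp only [Set.mem_inter_iff, Set.mem_setOf_eq]; tauto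
    rw [e₁, e₂]
    exact P1 A hA m m₂ v₂ z''
  -- V2 : P1 with A = univ (pure probability version, keeping `V z'`)
  have V2 : ∀ (m₂ : ℳ) (v₂ : 𝒱) (z'' : Bool),
      (P {ω | M z' ω = m₂ ∧ V z ω = v ∧ V z' ω = v₂ ∧ Z ω = z'' ∧ C ω = c}).toReal
        * (P {ω | C ω = c}).toReal
      = (P {ω | M z' ω = m₂ ∧ V z ω = v ∧ V z' ω = v₂ ∧ C ω = c}).toReal
        * (P {ω | Z ω = z'' ∧ C ω = c}).toReal := by
    intro m₂ v₂ z''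
    have h := P1 Set.univ MeasurableSet.univ m₂ m₂ v₂ z''
    have e₁ : {ω | Y z m₂ ω ∈ (Set.univ : Set ℝ) ∧ M z' ω = m₂ ∧ V z ω = v ∧ V z' ω = v₂
          ∧ Z ω = z'' ∧ C ω = c}
        = {ω | M z' ω = m₂ ∧ V z ω = v ∧ V z' ω = v₂ ∧ Z ω = z'' ∧ C ω = c} := by
      ext ω; simp only [Set.mem_setOf_eq, Set.mem_univ, true_and]
    have e₂ : {ω | Y z m₂ ω ∈ (Set.univ : Set ℝ) ∧ M z' ω = m₂ ∧ V z ω = v ∧ V z' ω = v₂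
          ∧ C ω = c}
        = {ω | M z' ω = m₂ ∧ V z ω = v ∧ V z' ω = v₂ ∧ C ω = c} := by
      ext ω; simp only [Set.mem_setOf_eq, Set.mem_univ, true_and]
    rw [e₁, e₂] at h
    exact h
  -- V3 : V2 marginalized over the value of `M z'`
  have V3 : ∀ (v₂ : 𝒱) (z'' : Bool),
      (P {ω | V z ω = v ∧ V z' ω = v₂ ∧ Z ω = z'' ∧ C ω = c}).toReal
        * (P {ω | C ω = c}).toReal
      = (P {ω | V z ω = v ∧ V z' ω = v₂ ∧ C ω = c}).toReal
        * (P {ω | Z ω = z'' ∧ C ω = c}).toReal := by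
    intro v₂ z''
    have msT₁ : MeasurableSet {ω | V z ω = v ∧ V z' ω = v₂ ∧ Z ω = z'' ∧ C ω = c} :=
      (msVz v).inter ((msVz' v₂).inter ((msZ z'').inter msC))
    have msT₂ : MeasurableSet {ω | V z ω = v ∧ V z' ω = v₂ ∧ C ω = c} :=
      (msVz v).inter ((msVz' v₂).inter msC)
    rw [pr_sum_fiber P (hM z') msT₁, pr_sum_fiber P (hM z') msT₂, Finset.sum_mul, Finset.sum_mul]
    refine Finset.sum_congr rfl fun m₂ _ => ?_
    have e₁ : {ω | M z' ω = m₂} ∩ {ω | V z ω = v ∧ V z' ω = v₂ ∧ Z ω = z'' ∧ C ω = c}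
        = {ω | M z' ω = m₂ ∧ V z ω = v ∧ V z' ω = v₂ ∧ Z ω = z'' ∧ C ω = c} := rfl
    have e₂ : {ω | M z' ω = m₂} ∩ {ω | V z ω = v ∧ V z' ω = v₂ ∧ C ω = c}
        = {ω | M z' ω = m₂ ∧ V z ω = v ∧ V z' ω = v₂ ∧ C ω = c} := rfl
    rw [e₁, e₂]
    exact V2 m₂ v₂ z''
  -- V4 : V3 marginalized over the value of `V z'`
  have V4 : ∀ z'' : Bool,
      (P {ω | V z ω = v ∧ Z ω = z'' ∧ C ω = c}).toReal * (P {ω | C ω = c}).toReal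
      = (P {ω | V z ω = v ∧ C ω = c}).toReal * (P {ω | Z ω = z'' ∧ C ω = c}).toReal := by
    intro z''
    have msT₁ : MeasurableSet {ω | V z ω = v ∧ Z ω = z'' ∧ C ω = c} :=
      (msVz v).inter ((msZ z'').inter msC)
    have msT₂ : MeasurableSet {ω | V z ω = v ∧ C ω = c} := (msVz v).inter msC
    rw [pr_sum_fiber P (hV z') msT₁, pr_sum_fiber P (hV z') msT₂, Finset.sum_mul, Finset.sum_mul]
    refine Finset.sum_congr rfl fun v₂ _ => ?_
    have e₁ : {ω | V z' ω = v₂} ∩ {ω | V z ω = v ∧ Z ω = z'' ∧ C ω = c}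
        = {ω | V z ω = v ∧ V z' ω = v₂ ∧ Z ω = z'' ∧ C ω = c} := by
      ext ω; simp only [Set.mem_inter_iff, Set.mem_setOf_eq]; tauto
    have e₂ : {ω | V z' ω = v₂} ∩ {ω | V z ω = v ∧ C ω = c}
        = {ω | V z ω = v ∧ V z' ω = v₂ ∧ C ω = c} := by
      ext ω; simp only [Set.mem_inter_iff, Set.mem_setOf_eq]; tauto
    rw [e₁, e₂]
    exact V3 v₂ z''
  -- H2s : assumption 2 marginalized over the value of `M z`
  have H2s : ∀ (m' : ℳ) (A : Set ℝ), MeasurableSet A →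
      (P {ω | Y z m' ω ∈ A ∧ M z' ω = m' ∧ V z ω = v ∧ Z ω = z ∧ C ω = c}).toReal
        * (P {ω | V z ω = v ∧ Z ω = z ∧ C ω = c}).toReal
      = (P ({ω | Y z m' ω ∈ A} ∩ {ω | V z ω = v ∧ Z ω = z ∧ C ω = c})).toReal
        * (P {ω | M z' ω = m' ∧ V z ω = v ∧ Z ω = z ∧ C ω = c}).toReal := by
    intro m' A hA
    have msT₁ : MeasurableSet {ω | Y z m' ω ∈ A ∧ M z' ω = m' ∧ V z ω = v ∧ Z ω = z ∧ C ω = c} :=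
      (hYmeas z m' hA).inter ((msMz' m').inter ((msVz v).inter ((msZ z).inter msC)))
    have msT₂ : MeasurableSet {ω | M z' ω = m' ∧ V z ω = v ∧ Z ω = z ∧ C ω = c} :=
      (msMz' m').inter ((msVz v).inter ((msZ z).inter msC))
    rw [pr_sum_fiber P (hM z) msT₁, pr_sum_fiber P (hM z) msT₂, Finset.sum_mul, Finset.mul_sum]
    refine Finset.sum_congr rfl fun m₁ _ => ?_
    have h := h2 z z' m' v c hpos A hA m₁ m'
    rw [cProb, cProb, cProb] at h
    have h' := cProb_mul_helper hpD h
    have e₁ : {ω | Y z m' ω ∈ A ∧ M z ω = m₁ ∧ M z' ω = m'}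
          ∩ {ω | V z ω = v ∧ Z ω = z ∧ C ω = c}
        = {ω | M z ω = m₁} ∩
          {ω | Y z m' ω ∈ A ∧ M z' ω = m' ∧ V z ω = v ∧ Z ω = z ∧ C ω = c} := by
      ext ω; simp only [Set.mem_inter_iff, Set.mem_setOf_eq]; tauto
    have e₂ : {ω | M z ω = m₁ ∧ M z' ω = m'} ∩ {ω | V z ω = v ∧ Z ω = z ∧ C ω = c}
        = {ω | M z ω = m₁} ∩ {ω | M z' ω = m' ∧ V z ω = v ∧ Z ω = z ∧ C ω = c} := by
      ext ω; simp only [Set.mem_inter_iff, Set.mem_setOf_eq]; tauto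
    rw [e₁, e₂] at h'
    exact h'
  -- H2' : assumption 2 with `za = zb = z`, `m₁ = m₂ = m'`
  have H2' : ∀ (m' : ℳ) (A : Set ℝ), MeasurableSet A →
      (P ({ω | Y z m' ω ∈ A} ∩ {ω | M z ω = m' ∧ V z ω = v ∧ Z ω = z ∧ C ω = c})).toReal
        * (P {ω | V z ω = v ∧ Z ω = z ∧ C ω = c}).toReal
      = (P ({ω | Y z m' ω ∈ A} ∩ {ω | V z ω = v ∧ Z ω = z ∧ C ω = c})).toReal
        * (P {ω | M z ω = m' ∧ V z ω = v ∧ Z ω = z ∧ C ω = c}).toReal := by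
    intro m' A hA
    have h := h2 z z m' v c hpos A hA m' m'
    rw [cProb, cProb, cProb] at h
    have h' := cProb_mul_helper hpD h
    have e₁ : {ω | Y z m' ω ∈ A ∧ M z ω = m' ∧ M z ω = m'}
          ∩ {ω | V z ω = v ∧ Z ω = z ∧ C ω = c}
        = {ω | Y z m' ω ∈ A} ∩ {ω | M z ω = m' ∧ V z ω = v ∧ Z ω = z ∧ C ω = c} := by
      ext ω; simp only [Set.mem_inter_iff, Set.mem_setOf_eq]; tauto
    have e₂ : {ω | M z ω = m' ∧ M z ω = m'} ∩ {ω | V z ω = v ∧ Z ω = z ∧ C ω = c}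
        = {ω | M z ω = m' ∧ V z ω = v ∧ Z ω = z ∧ C ω = c} := by
      ext ω; simp only [Set.mem_inter_iff, Set.mem_setOf_eq]; tauto
    rw [e₁, e₂] at h'
    exact h'
  -- H3' : assumption 3 in product form
  have H3' : ∀ (v' : 𝒱) (m' : ℳ),
      (P {ω | M z' ω = m' ∧ V z ω = v ∧ V z' ω = v' ∧ Z ω = z' ∧ C ω = c}).toReal
        * (P {ω | V z' ω = v' ∧ Z ω = z' ∧ C ω = c}).toReal
      = (P ({ω | M z' ω = m'} ∩ {ω | V z' ω = v' ∧ Z ω = z' ∧ C ω = c})).toReal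
        * (P {ω | V z ω = v ∧ V z' ω = v' ∧ Z ω = z' ∧ C ω = c}).toReal := by
    intro v' m'
    have h := h3 v' c (hpos' v') m' v
    rw [cProb, cProb, cProb] at h
    have h' := cProb_mul_helper (hpE v') h
    have e₁ : {ω | M z' ω = m' ∧ V z ω = v} ∩ {ω | V z' ω = v' ∧ Z ω = z' ∧ C ω = c}
        = {ω | M z' ω = m' ∧ V z ω = v ∧ V z' ω = v' ∧ Z ω = z' ∧ C ω = c} := by
      ext ω; simp only [Set.mem_inter_iff, Set.mem_setOf_eq]; tauto
    have e₂ : {ω | V z ω = v} ∩ {ω | V z' ω = v' ∧ Z ω = z' ∧ C ω = c}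
        = {ω | V z ω = v ∧ V z' ω = v' ∧ Z ω = z' ∧ C ω = c} := rfl
    rw [e₁, e₂] at h'
    exact h'
  -- crux : the cross-world factorization of the joint law of (M z', V z) at Z = z
  have crux : ∀ (v' : 𝒱) (m' : ℳ),
      (P {ω | M z' ω = m' ∧ V z ω = v ∧ V z' ω = v' ∧ Z ω = z ∧ C ω = c}).toReal
        * (P {ω | V z' ω = v' ∧ Z ω = z' ∧ C ω = c}).toReal
      = (P ({ω | M z' ω = m'} ∩ {ω | V z' ω = v' ∧ Z ω = z' ∧ C ω = c})).toReal
        * (P {ω | V z ω = v ∧ V z' ω = v' ∧ Z ω = z ∧ C ω = c}).toReal := by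
    intro v' m'
    have hI : (P {ω | M z' ω = m' ∧ V z ω = v ∧ V z' ω = v' ∧ Z ω = z ∧ C ω = c}).toReal
          * (P {ω | Z ω = z' ∧ C ω = c}).toReal
        = (P {ω | M z' ω = m' ∧ V z ω = v ∧ V z' ω = v' ∧ Z ω = z' ∧ C ω = c}).toReal
          * (P {ω | Z ω = z ∧ C ω = c}).toReal := by
      apply mul_right_cancel₀ hpC.ne'
      linear_combination (P {ω | Z ω = z' ∧ C ω = c}).toReal * V2 m' v' z
        - (P {ω | Z ω = z ∧ C ω = c}).toReal * V2 m' v' z'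
    have hII : (P {ω | V z ω = v ∧ V z' ω = v' ∧ Z ω = z ∧ C ω = c}).toReal
          * (P {ω | Z ω = z' ∧ C ω = c}).toReal
        = (P {ω | V z ω = v ∧ V z' ω = v' ∧ Z ω = z' ∧ C ω = c}).toReal
          * (P {ω | Z ω = z ∧ C ω = c}).toReal := by
      apply mul_right_cancel₀ hpC.ne'
      linear_combination (P {ω | Z ω = z' ∧ C ω = c}).toReal * V3 v' z
        - (P {ω | Z ω = z ∧ C ω = c}).toReal * V3 v' z'
    apply mul_right_cancel₀ hpZz'.ne'
    linear_combination (P {ω | V z' ω = v' ∧ Z ω = z' ∧ C ω = c}).toReal * hI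
      + (P {ω | Z ω = z ∧ C ω = c}).toReal * H3' v' m'
      - (P ({ω | M z' ω = m'} ∩ {ω | V z' ω = v' ∧ Z ω = z' ∧ C ω = c})).toReal * hII
  -- Step B : change the conditioning event from {V z = v, C = c} to {V z = v, Z = z, C = c}
  have intB : ∀ m' : ℳ,
      (∫ ω in {ω | M z' ω = m' ∧ V z ω = v ∧ C ω = c}, Y z m' ω ∂P)
          / (P {ω | V z ω = v ∧ C ω = c}).toReal
      = (∫ ω in {ω | M z' ω = m' ∧ V z ω = v ∧ Z ω = z ∧ C ω = c}, Y z m' ω ∂P)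
          / (P {ω | V z ω = v ∧ Z ω = z ∧ C ω = c}).toReal := by
    intro m'
    have hkey := key_integral P (Y z m') (hYmeas z m')
      {ω | M z' ω = m' ∧ V z ω = v ∧ C ω = c}
      {ω | M z' ω = m' ∧ V z ω = v ∧ Z ω = z ∧ C ω = c}
      (P {ω | V z ω = v ∧ C ω = c}).toReal
      (P {ω | V z ω = v ∧ Z ω = z ∧ C ω = c}).toReal
      hpB.le hpD.le ?_
    · rw [div_eq_div_iff hpB.ne' hpD.ne']
      linear_combination hkey
    · intro A hA
      have e₁ : Y z m' ⁻¹' A ∩ {ω | M z' ω = m' ∧ V z ω = v ∧ C ω = c}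
          = {ω | Y z m' ω ∈ A ∧ M z' ω = m' ∧ V z ω = v ∧ C ω = c} := rfl
      have e₂ : Y z m' ⁻¹' A ∩ {ω | M z' ω = m' ∧ V z ω = v ∧ Z ω = z ∧ C ω = c}
          = {ω | Y z m' ω ∈ A ∧ M z' ω = m' ∧ V z ω = v ∧ Z ω = z ∧ C ω = c} := rfl
      rw [e₁, e₂]
      apply mul_right_cancel₀ hpC.ne'
      linear_combination (P {ω | Y z m' ω ∈ A ∧ M z' ω = m' ∧ V z ω = v ∧ C ω = c}).toReal * V4 z
        - (P {ω | V z ω = v ∧ C ω = c}).toReal * V1 A hA m' m' z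
  -- Step C : peel off the event {M z' = m'} using assumption 2
  have intC : ∀ m' : ℳ,
      (P {ω | V z ω = v ∧ Z ω = z ∧ C ω = c}).toReal
          * ∫ ω in {ω | M z' ω = m' ∧ V z ω = v ∧ Z ω = z ∧ C ω = c}, Y z m' ω ∂P
      = (P {ω | M z' ω = m' ∧ V z ω = v ∧ Z ω = z ∧ C ω = c}).toReal
          * ∫ ω in {ω | V z ω = v ∧ Z ω = z ∧ C ω = c}, Y z m' ω ∂P := by
    intro m'
    refine key_integral P (Y z m') (hYmeas z m') _ _ _ _ ENNReal.toReal_nonneg hpD.le ?_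
    intro A hA
    have e₁ : Y z m' ⁻¹' A ∩ {ω | M z' ω = m' ∧ V z ω = v ∧ Z ω = z ∧ C ω = c}
        = {ω | Y z m' ω ∈ A ∧ M z' ω = m' ∧ V z ω = v ∧ Z ω = z ∧ C ω = c} := rfl
    have e₂ : Y z m' ⁻¹' A ∩ {ω | V z ω = v ∧ Z ω = z ∧ C ω = c}
        = {ω | Y z m' ω ∈ A} ∩ {ω | V z ω = v ∧ Z ω = z ∧ C ω = c} := rfl
    rw [e₁, e₂]
    linear_combination H2s m' A hA
  -- Step C2 : recondition on {M z = m'} using assumption 2 with za = zb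
  have intC2 : ∀ m' : ℳ,
      (P {ω | V z ω = v ∧ Z ω = z ∧ C ω = c}).toReal
          * ∫ ω in {ω | M z ω = m' ∧ V z ω = v ∧ Z ω = z ∧ C ω = c}, Y z m' ω ∂P
      = (P {ω | M z ω = m' ∧ V z ω = v ∧ Z ω = z ∧ C ω = c}).toReal
          * ∫ ω in {ω | V z ω = v ∧ Z ω = z ∧ C ω = c}, Y z m' ω ∂P := by
    intro m'
    refine key_integral P (Y z m') (hYmeas z m') _ _ _ _ (hpDm m').le hpD.le ?_
    intro A hA
    have e₁ : Y z m' ⁻¹' A ∩ {ω | M z ω = m' ∧ V z ω = v ∧ Z ω = z ∧ C ω = c}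
        = {ω | Y z m' ω ∈ A} ∩ {ω | M z ω = m' ∧ V z ω = v ∧ Z ω = z ∧ C ω = c} := rfl
    have e₂ : Y z m' ⁻¹' A ∩ {ω | V z ω = v ∧ Z ω = z ∧ C ω = c}
        = {ω | Y z m' ω ∈ A} ∩ {ω | V z ω = v ∧ Z ω = z ∧ C ω = c} := rfl
    rw [e₁, e₂]
    linear_combination H2' m' A hA
  -- Step A : decompose the cross-world outcome according to the value of M z'
  have hsum : ∫ ω in {ω | V z ω = v ∧ C ω = c}, Y z (M z' ω) ω ∂P
      = ∑ m' : ℳ, ∫ ω in {ω | M z' ω = m' ∧ V z ω = v ∧ C ω = c}, Y z m' ω ∂P := by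
    have hfun : ∀ ω, Y z (M z' ω) ω
        = ∑ m' : ℳ, Set.indicator {ω' | M z' ω' = m'} (Y z m') ω := by
      intro ω
      rw [Finset.sum_eq_single (M z' ω)]
      · simp [Set.indicator_apply]
      · intro b _ hb
        exact Set.indicator_of_notMem (fun hmem => hb hmem.symm) _
      · intro h; exact absurd (Finset.mem_univ _) h
    calc ∫ ω in {ω | V z ω = v ∧ C ω = c}, Y z (M z' ω) ω ∂P
        = ∫ ω in {ω | V z ω = v ∧ C ω = c},
            (∑ m' : ℳ, Set.indicator {ω' | M z' ω' = m'} (Y z m') ω) ∂P :=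
          integral_congr_ae (Filter.Eventually.of_forall fun ω => hfun ω)
      _ = ∑ m' : ℳ, ∫ ω in {ω | V z ω = v ∧ C ω = c},
            Set.indicator {ω' | M z' ω' = m'} (Y z m') ω ∂P :=
          integral_finset_sum _ fun m' _ => ((hYint z m').indicator (msMz' m')).integrableOn
      _ = ∑ m' : ℳ, ∫ ω in {ω | M z' ω = m' ∧ V z ω = v ∧ C ω = c}, Y z m' ω ∂P := by
          refine Finset.sum_congr rfl fun m' _ => ?_
          rw [integral_indicator (msMz' m'), Measure.restrict_restrict (msMz' m')]
          rfl
  -- final assembly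
  rw [cExp, hsum, Finset.sum_div]
  conv_rhs => rw [Finset.sum_comm]
  refine Finset.sum_congr rfl fun m' _ => ?_
  rw [intB m']
  have hS2 : ∫ ω in {ω | M z' ω = m' ∧ V z ω = v ∧ Z ω = z ∧ C ω = c}, Y z m' ω ∂P
      = (P {ω | M z' ω = m' ∧ V z ω = v ∧ Z ω = z ∧ C ω = c}).toReal
        * (∫ ω in {ω | V z ω = v ∧ Z ω = z ∧ C ω = c}, Y z m' ω ∂P)
        / (P {ω | V z ω = v ∧ Z ω = z ∧ C ω = c}).toReal := by
    rw [eq_div_iff hpD.ne']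
    linear_combination intC m'
  have hDm : ∫ ω in {ω | M z ω = m' ∧ V z ω = v ∧ Z ω = z ∧ C ω = c}, Y z m' ω ∂P
      = (P {ω | M z ω = m' ∧ V z ω = v ∧ Z ω = z ∧ C ω = c}).toReal
        * (∫ ω in {ω | V z ω = v ∧ Z ω = z ∧ C ω = c}, Y z m' ω ∂P)
        / (P {ω | V z ω = v ∧ Z ω = z ∧ C ω = c}).toReal := by
    rw [eq_div_iff hpD.ne']
    linear_combination intC2 m'
  have hMD : (P {ω | M z' ω = m' ∧ V z ω = v ∧ Z ω = z ∧ C ω = c}).toReal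
        / (P {ω | V z ω = v ∧ Z ω = z ∧ C ω = c}).toReal
      = ∑ v' : 𝒱,
          cProb P {ω | M z' ω = m'} {ω | V z' ω = v' ∧ Z ω = z' ∧ C ω = c}
            * cProb P {ω | V z' ω = v'} {ω | V z ω = v ∧ Z ω = z ∧ C ω = c} := by
    have msT : MeasurableSet {ω | M z' ω = m' ∧ V z ω = v ∧ Z ω = z ∧ C ω = c} :=
      (msMz' m').inter ((msVz v).inter ((msZ z).inter msC))
    rw [pr_sum_fiber P (hV z') msT, Finset.sum_div]
    refine Finset.sum_congr rfl fun v' _ => ?_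
    have e₁ : {ω | V z' ω = v'} ∩ {ω | M z' ω = m' ∧ V z ω = v ∧ Z ω = z ∧ C ω = c}
        = {ω | M z' ω = m' ∧ V z ω = v ∧ V z' ω = v' ∧ Z ω = z ∧ C ω = c} := by
      ext ω; simp only [Set.mem_inter_iff, Set.mem_setOf_eq]; tauto
    have e₂ : {ω | V z' ω = v'} ∩ {ω | V z ω = v ∧ Z ω = z ∧ C ω = c}
        = {ω | V z ω = v ∧ V z' ω = v' ∧ Z ω = z ∧ C ω = c} := by
      ext ω; simp only [Set.mem_inter_iff, Set.mem_setOf_eq]; tauto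
    rw [e₁]
    simp only [cProb]
    rw [e₂, div_mul_div_comm, div_eq_div_iff hpD.ne' (mul_pos (hpE v') hpD).ne']
    linear_combination (P {ω | V z ω = v ∧ Z ω = z ∧ C ω = c}).toReal * crux v' m'
  rw [hS2]
  simp only [cExp]
  rw [hDm]
  have hne1 : (P {ω | M z ω = m' ∧ V z ω = v ∧ Z ω = z ∧ C ω = c}).toReal ≠ 0 := (hpDm m').ne'
  have hne2 : (P {ω | V z ω = v ∧ Z ω = z ∧ C ω = c}).toReal ≠ 0 := hpD.ne'
  have hcancel : (P {ω | M z ω = m' ∧ V z ω = v ∧ Z ω = z ∧ C ω = c}).toReal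
        * (∫ ω in {ω | V z ω = v ∧ Z ω = z ∧ C ω = c}, Y z m' ω ∂P)
        / (P {ω | V z ω = v ∧ Z ω = z ∧ C ω = c}).toReal
        / (P {ω | M z ω = m' ∧ V z ω = v ∧ Z ω = z ∧ C ω = c}).toReal
      = (∫ ω in {ω | V z ω = v ∧ Z ω = z ∧ C ω = c}, Y z m' ω ∂P)
        / (P {ω | V z ω = v ∧ Z ω = z ∧ C ω = c}).toReal := by
    field_simp
  rw [hcancel]
  rw [show (P {ω | M z' ω = m' ∧ V z ω = v ∧ Z ω = z ∧ C ω = c}).toReal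
        * (∫ ω in {ω | V z ω = v ∧ Z ω = z ∧ C ω = c}, Y z m' ω ∂P)
        / (P {ω | V z ω = v ∧ Z ω = z ∧ C ω = c}).toReal
        / (P {ω | V z ω = v ∧ Z ω = z ∧ C ω = c}).toReal
      = (P {ω | M z' ω = m' ∧ V z ω = v ∧ Z ω = z ∧ C ω = c}).toReal
          / (P {ω | V z ω = v ∧ Z ω = z ∧ C ω = c}).toReal
        * ((∫ ω in {ω | V z ω = v ∧ Z ω = z ∧ C ω = c}, Y z m' ω ∂P)
          / (P {ω | V z ω = v ∧ Z ω = z ∧ C ω = c}).toReal) from by ring,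
    hMD, Finset.sum_mul]
  exact Finset.sum_congr rfl fun v' _ => by ring
end

section
/- Fix z, z' ∈ {0,1} with z ≠ z'. Assume Assumptions (1), (2) and (3), and fix v ∈ 𝒱 and c ∈ 𝒞 such that P(V_z = v, Z = z, C = c) > 0, such that P(V_{z'} = v', Z = z', C = c) > 0 for every v' ∈ 𝒱, and such that P(M_z = m', V_z = v, Z = z, C = c) > 0 for every m' ∈ ℳ. Define the mediator probability ratio ψ(m', v, v', c) = P(M_{z'} = m' | V_{z'} = v', Z = z', C = c) / P(M_z = m' | V_z = v, Z = z, C = c). Then E[Y_{z,M_{z'}} | V_z = v, C = c] = Σ_{v' ∈ 𝒱} Σ_{m' ∈ ℳ} ψ(m', v, v', c) · E[Y_{z,m'} | M_z = m', V_z = v, Z = z, C = c] · P(M_z = m' | V_z = v, Z = z, C = c) · P(V_{z'} = v' | V_z = v, Z = z, C = c). -/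
open MeasureTheory ProbabilityTheory

lemma pr_partition' {Ω ι : Type*} [MeasurableSpace Ω] [MeasurableSpace ι]
    [MeasurableSingletonClass ι] (P : Measure Ω) (f : Ω → ι) (hf : Measurable f)
    (s : Finset ι) (Q : Set Ω) (hQ : MeasurableSet Q) :
    ∑ i ∈ s, P ({ω | f ω = i} ∩ Q) = P ({ω | f ω ∈ s} ∩ Q) := by
  have h : {ω | f ω ∈ s} ∩ Q = ⋃ i ∈ s, ({ω | f ω = i} ∩ Q) := by
    ext ω
    simp only [Set.mem_inter_iff, Set.mem_setOf_eq, Set.mem_iUnion, exists_prop]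
    constructor
    · rintro ⟨hm, hq⟩; exact ⟨f ω, hm, rfl, hq⟩
    · rintro ⟨i, hi, hfi, hq⟩; exact ⟨hfi ▸ hi, hq⟩
  rw [h, measure_biUnion_finset]
  · intro i _ j _ hij
    simp only [Function.onFun, Set.disjoint_left, Set.mem_inter_iff, Set.mem_setOf_eq]
    rintro ω ⟨rfl, -⟩ ⟨h2, -⟩
    exact hij h2
  · intro i _
    exact (hf (measurableSet_singleton i)).inter hQ

lemma transfer {Ω : Type*} [MeasurableSpace Ω] (P : Measure Ω) [IsFiniteMeasure P]
    (Y : Ω → ℝ) (hY : Measurable Y) (hint : Integrable Y P)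
    (E₁ E₂ : Set Ω) (b₁ b₂ : ENNReal)
    (h : ∀ A : Set ℝ, MeasurableSet A → P (Y ⁻¹' A ∩ E₁) * b₁ = P (Y ⁻¹' A ∩ E₂) * b₂) :
    (∫ ω in E₁, Y ω ∂P) * b₁.toReal = (∫ ω in E₂, Y ω ∂P) * b₂.toReal := by
  have hmeq : b₁ • ((P.restrict E₁).map Y) = b₂ • ((P.restrict E₂).map Y) := by
    ext A hA
    simp only [Measure.smul_apply, smul_eq_mul, Measure.map_apply hY hA,
      Measure.restrict_apply (hY hA)]
    rw [mul_comm, mul_comm b₂]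
    exact h A hA
  have hI := congrArg (fun μ : Measure ℝ => ∫ x, x ∂μ) hmeq
  simp only [integral_smul_measure] at hI
  have key : ∀ E : Set Ω, ∫ x, x ∂(Measure.map Y (P.restrict E)) = ∫ ω in E, Y ω ∂P :=
    fun E => integral_map hY.aemeasurable aestronglyMeasurable_id
  rw [key, key] at hI
  simpa [smul_eq_mul, mul_comm] using hI

lemma cProb_mul_eq {Ω : Type*} [MeasurableSpace Ω] (P : Measure Ω) [IsFiniteMeasure P]
    {S₁ S₂ S₃ B : Set Ω} (hB0 : P B ≠ 0)
    (h : cProb P S₁ B = cProb P S₂ B * cProb P S₃ B) :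
    P (S₁ ∩ B) * P B = P (S₂ ∩ B) * P (S₃ ∩ B) := by
  have hBt : (P B).toReal ≠ 0 := by
    simp [ENNReal.toReal_eq_zero_iff, hB0, measure_ne_top P B]
  rw [cProb, cProb, cProb, div_mul_div_comm, div_eq_div_iff hBt (by positivity)] at h
  have h3 : (P (S₁ ∩ B)).toReal * (P B).toReal = (P (S₂ ∩ B)).toReal * (P (S₃ ∩ B)).toReal :=
    mul_right_cancel₀ hBt (by linear_combination h)
  have h2 : (P (S₁ ∩ B) * P B).toReal = (P (S₂ ∩ B) * P (S₃ ∩ B)).toReal := by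
    rw [ENNReal.toReal_mul, ENNReal.toReal_mul]; exact h3
  exact (ENNReal.toReal_eq_toReal_iff' (by finiteness) (by finiteness)).mp h2

lemma MH1lem {Ω 𝒱 ℳ : Type*} [MeasurableSpace Ω]
    [MeasurableSpace 𝒱] [MeasurableSingletonClass 𝒱]
    [MeasurableSpace ℳ] [MeasurableSingletonClass ℳ]
    (P : Measure Ω) [IsFiniteMeasure P]
    (Ma Mb : Ω → ℳ) (Va Vb : Ω → 𝒱) (Z : Ω → Bool) (Yf : Ω → ℝ) (Bc : Set Ω)
    (hMa : Measurable Ma) (hMb : Measurable Mb) (hVa : Measurable Va) (hVb : Measurable Vb)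
    (hZm : Measurable Z) (hYm : Measurable Yf) (hBc : MeasurableSet Bc) (hBc0 : P Bc ≠ 0)
    (h1 : ∀ A : Set ℝ, MeasurableSet A → ∀ (m₁ m₂ : ℳ) (v₁ v₂ : 𝒱) (z'' : Bool),
      cProb P {ω | Yf ω ∈ A ∧ Ma ω = m₁ ∧ Mb ω = m₂ ∧ Va ω = v₁ ∧ Vb ω = v₂ ∧ Z ω = z''} Bc
        = cProb P {ω | Yf ω ∈ A ∧ Ma ω = m₁ ∧ Mb ω = m₂ ∧ Va ω = v₁ ∧ Vb ω = v₂} Bc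
          * cProb P {ω | Z ω = z''} Bc)
    (A : Set ℝ) (hA : MeasurableSet A) (s : Finset (ℳ × ℳ × 𝒱 × 𝒱)) (z'' : Bool) :
    P (Yf ⁻¹' A ∩ ({ω | (Ma ω, Mb ω, Va ω, Vb ω) ∈ s} ∩ ({ω | Z ω = z''} ∩ Bc))) * P Bc
      = P (Yf ⁻¹' A ∩ ({ω | (Ma ω, Mb ω, Va ω, Vb ω) ∈ s} ∩ Bc)) * P ({ω | Z ω = z''} ∩ Bc) := by
  have hf : Measurable fun ω => (Ma ω, Mb ω, Va ω, Vb ω) :=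
    hMa.prodMk (hMb.prodMk (hVa.prodMk hVb))
  have hQ₁ : MeasurableSet (Yf ⁻¹' A ∩ ({ω | Z ω = z''} ∩ Bc)) :=
    (hYm hA).inter ((hZm (measurableSet_singleton z'')).inter hBc)
  have hQ₂ : MeasurableSet (Yf ⁻¹' A ∩ Bc) := (hYm hA).inter hBc
  have e₁ : Yf ⁻¹' A ∩ ({ω | (Ma ω, Mb ω, Va ω, Vb ω) ∈ s} ∩ ({ω | Z ω = z''} ∩ Bc))
      = {ω | (Ma ω, Mb ω, Va ω, Vb ω) ∈ s} ∩ (Yf ⁻¹' A ∩ ({ω | Z ω = z''} ∩ Bc)) := by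
    ext ω
    simp only [Set.mem_inter_iff, Set.mem_setOf_eq, Set.mem_preimage]
    try tauto
  have e₂ : Yf ⁻¹' A ∩ ({ω | (Ma ω, Mb ω, Va ω, Vb ω) ∈ s} ∩ Bc)
      = {ω | (Ma ω, Mb ω, Va ω, Vb ω) ∈ s} ∩ (Yf ⁻¹' A ∩ Bc) := by
    ext ω
    simp only [Set.mem_inter_iff, Set.mem_setOf_eq, Set.mem_preimage]
    try tauto
  rw [e₁, e₂, ← pr_partition' P _ hf s _ hQ₁, ← pr_partition' P _ hf s _ hQ₂,
    Finset.sum_mul, Finset.sum_mul]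
  refine Finset.sum_congr rfl fun x _ => ?_
  obtain ⟨m₁, m₂, v₁, v₂⟩ := x
  have e₃ : {ω | (Ma ω, Mb ω, Va ω, Vb ω) = (m₁, m₂, v₁, v₂)}
        ∩ (Yf ⁻¹' A ∩ ({ω | Z ω = z''} ∩ Bc))
      = {ω | Yf ω ∈ A ∧ Ma ω = m₁ ∧ Mb ω = m₂ ∧ Va ω = v₁ ∧ Vb ω = v₂ ∧ Z ω = z''} ∩ Bc := by
    ext ω
    simp only [Set.mem_inter_iff, Set.mem_setOf_eq, Set.mem_preimage, Prod.mk.injEq]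
    try tauto
  have e₄ : {ω | (Ma ω, Mb ω, Va ω, Vb ω) = (m₁, m₂, v₁, v₂)} ∩ (Yf ⁻¹' A ∩ Bc)
      = {ω | Yf ω ∈ A ∧ Ma ω = m₁ ∧ Mb ω = m₂ ∧ Va ω = v₁ ∧ Vb ω = v₂} ∩ Bc := by
    ext ω
    simp only [Set.mem_inter_iff, Set.mem_setOf_eq, Set.mem_preimage, Prod.mk.injEq]
    try tauto
  rw [e₃, e₄]
  exact cProb_mul_eq P hBc0 (h1 A hA m₁ m₂ v₁ v₂ z'')

lemma MH2lem {Ω ℳ : Type*} [MeasurableSpace Ω]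
    [MeasurableSpace ℳ] [MeasurableSingletonClass ℳ]
    (P : Measure Ω) [IsFiniteMeasure P]
    (Ma Mb : Ω → ℳ) (Yf : Ω → ℝ) (B : Set Ω)
    (hMa : Measurable Ma) (hMb : Measurable Mb) (hYm : Measurable Yf)
    (hB : MeasurableSet B) (hB0 : P B ≠ 0)
    (h2 : ∀ A : Set ℝ, MeasurableSet A → ∀ m₁ m₂ : ℳ,
      cProb P {ω | Yf ω ∈ A ∧ Ma ω = m₁ ∧ Mb ω = m₂} B
        = cProb P {ω | Yf ω ∈ A} B * cProb P {ω | Ma ω = m₁ ∧ Mb ω = m₂} B)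
    (A : Set ℝ) (hA : MeasurableSet A) (s : Finset (ℳ × ℳ)) :
    P (Yf ⁻¹' A ∩ ({ω | (Ma ω, Mb ω) ∈ s} ∩ B)) * P B
      = P (Yf ⁻¹' A ∩ B) * P ({ω | (Ma ω, Mb ω) ∈ s} ∩ B) := by
  have hf : Measurable fun ω => (Ma ω, Mb ω) := hMa.prodMk hMb
  have hQ : MeasurableSet (Yf ⁻¹' A ∩ B) := (hYm hA).inter hB
  have e₁ : Yf ⁻¹' A ∩ ({ω | (Ma ω, Mb ω) ∈ s} ∩ B)
      = {ω | (Ma ω, Mb ω) ∈ s} ∩ (Yf ⁻¹' A ∩ B) := by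
    ext ω
    simp only [Set.mem_inter_iff, Set.mem_setOf_eq, Set.mem_preimage]
    try tauto
  rw [e₁, ← pr_partition' P _ hf s _ hQ, ← pr_partition' P _ hf s _ hB,
    Finset.sum_mul, Finset.mul_sum]
  refine Finset.sum_congr rfl fun x _ => ?_
  obtain ⟨m₁, m₂⟩ := x
  have e₂ : {ω | (Ma ω, Mb ω) = (m₁, m₂)} ∩ (Yf ⁻¹' A ∩ B)
      = {ω | Yf ω ∈ A ∧ Ma ω = m₁ ∧ Mb ω = m₂} ∩ B := by
    ext ω
    simp only [Set.mem_inter_iff, Set.mem_setOf_eq, Set.mem_preimage, Prod.mk.injEq]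
    try tauto
  have e₃ : {ω | (Ma ω, Mb ω) = (m₁, m₂)} ∩ B = {ω | Ma ω = m₁ ∧ Mb ω = m₂} ∩ B := by
    ext ω
    simp only [Set.mem_inter_iff, Set.mem_setOf_eq, Prod.mk.injEq]
    try tauto
  rw [e₂, e₃]
  exact cProb_mul_eq P hB0 (h2 A hA m₁ m₂)

/-- The ratio-of-mediator-probability-weighting (RMPW) representation: under Assumptions (1),
(2) and (3), the cross-world mean is a weighted average with mediator probability ratio `ψ`. -/
theorem crossworld_mean_rmpw_representation
    {Ω 𝒱 ℳ 𝒞 : Type*} [MeasurableSpace Ω]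
    [Fintype 𝒱] [MeasurableSpace 𝒱] [MeasurableSingletonClass 𝒱]
    [Fintype ℳ] [MeasurableSpace ℳ] [MeasurableSingletonClass ℳ]
    [Fintype 𝒞] [MeasurableSpace 𝒞] [MeasurableSingletonClass 𝒞]
    (P : Measure Ω) [IsProbabilityMeasure P]
    (Z : Ω → Bool) (C : Ω → 𝒞) (V : Bool → Ω → 𝒱) (M : Bool → Ω → ℳ)
    (Y : Bool → ℳ → Ω → ℝ)
    (hZ : Measurable Z) (hC : Measurable C)
    (hV : ∀ zb, Measurable (V zb)) (hM : ∀ zb, Measurable (M zb))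
    (hYmeas : ∀ zb m, Measurable (Y zb m)) (hYint : ∀ zb m, Integrable (Y zb m) P)
    (z z' : Bool) (hzz' : z ≠ z')
    -- Assumption (1): ignorable treatment assignment given baseline confounders
    (h1 : ∀ (za zb : Bool) (m : ℳ), ∀ A : Set ℝ, MeasurableSet A →
      ∀ (m₁ m₂ : ℳ) (v₁ v₂ : 𝒱) (z'' : Bool) (c : 𝒞),
      0 < P {ω | C ω = c} →
      cProb P {ω | Y za m ω ∈ A ∧ M za ω = m₁ ∧ M zb ω = m₂ ∧ V za ω = v₁ ∧ V zb ω = v₂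
                    ∧ Z ω = z''} {ω | C ω = c}
        = cProb P {ω | Y za m ω ∈ A ∧ M za ω = m₁ ∧ M zb ω = m₂ ∧ V za ω = v₁ ∧ V zb ω = v₂}
            {ω | C ω = c}
          * cProb P {ω | Z ω = z''} {ω | C ω = c})
    -- Assumption (2): ignorable mediator value assignment given baseline confounders
    -- and the post-treatment confounder
    (h2 : ∀ (za zb : Bool) (m : ℳ) (v₀ : 𝒱) (c : 𝒞),
      0 < P {ω | V za ω = v₀ ∧ Z ω = za ∧ C ω = c} →
      ∀ A : Set ℝ, MeasurableSet A → ∀ (m₁ m₂ : ℳ),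
      cProb P {ω | Y za m ω ∈ A ∧ M za ω = m₁ ∧ M zb ω = m₂}
          {ω | V za ω = v₀ ∧ Z ω = za ∧ C ω = c}
        = cProb P {ω | Y za m ω ∈ A} {ω | V za ω = v₀ ∧ Z ω = za ∧ C ω = c}
          * cProb P {ω | M za ω = m₁ ∧ M zb ω = m₂} {ω | V za ω = v₀ ∧ Z ω = za ∧ C ω = c})
    -- Assumption (3): conditional cross-world independence of `V_z` and `M_{z'}`
    (h3 : ∀ (v' : 𝒱) (c : 𝒞),
      0 < P {ω | V z' ω = v' ∧ Z ω = z' ∧ C ω = c} →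
      ∀ (m' : ℳ) (v : 𝒱),
      cProb P {ω | M z' ω = m' ∧ V z ω = v} {ω | V z' ω = v' ∧ Z ω = z' ∧ C ω = c}
        = cProb P {ω | M z' ω = m'} {ω | V z' ω = v' ∧ Z ω = z' ∧ C ω = c}
          * cProb P {ω | V z ω = v} {ω | V z' ω = v' ∧ Z ω = z' ∧ C ω = c})
    (v : 𝒱) (c : 𝒞)
    (hpos : 0 < P {ω | V z ω = v ∧ Z ω = z ∧ C ω = c})
    (hpos' : ∀ v' : 𝒱, 0 < P {ω | V z' ω = v' ∧ Z ω = z' ∧ C ω = c})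
    (hposM : ∀ m' : ℳ, 0 < P {ω | M z ω = m' ∧ V z ω = v ∧ Z ω = z ∧ C ω = c}) :
    -- the factor `cProb … / cProb …` is the mediator probability ratio `ψ (m', v, v', c)`
    cExp P (fun ω => Y z (M z' ω) ω) {ω | V z ω = v ∧ C ω = c}
      = ∑ v' : 𝒱, ∑ m' : ℳ,
          (cProb P {ω | M z' ω = m'} {ω | V z' ω = v' ∧ Z ω = z' ∧ C ω = c}
              / cProb P {ω | M z ω = m'} {ω | V z ω = v ∧ Z ω = z ∧ C ω = c})
            * cExp P (Y z m') {ω | M z ω = m' ∧ V z ω = v ∧ Z ω = z ∧ C ω = c}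
            * cProb P {ω | M z ω = m'} {ω | V z ω = v ∧ Z ω = z ∧ C ω = c}
            * cProb P {ω | V z' ω = v'} {ω | V z ω = v ∧ Z ω = z ∧ C ω = c} := by
  classical
  have mCs : MeasurableSet {ω | C ω = c} := hC (measurableSet_singleton c)
  have mZs : ∀ z'' : Bool, MeasurableSet {ω | Z ω = z''} := fun z'' => hZ (measurableSet_singleton z'')
  have mVs : ∀ (zb : Bool) (v₀ : 𝒱), MeasurableSet {ω | V zb ω = v₀} := fun zb v₀ => hV zb (measurableSet_singleton v₀)
  have mMs : ∀ (zb : Bool) (m₀ : ℳ), MeasurableSet {ω | M zb ω = m₀} := fun zb m₀ => hM zb (measurableSet_singleton m₀)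
  have mBZ : MeasurableSet {ω | V z ω = v ∧ Z ω = z ∧ C ω = c} := (mVs z v).inter ((mZs z).inter mCs)
  have mS0 : MeasurableSet {ω | V z ω = v ∧ C ω = c} := (mVs z v).inter mCs
  have hBcpos : 0 < P {ω | C ω = c} := lt_of_lt_of_le hpos (measure_mono (fun ω hω => hω.2.2))
  have hBc0 : P {ω | C ω = c} ≠ 0 := hBcpos.ne'
  have hZpos : 0 < P ({ω | Z ω = z} ∩ {ω | C ω = c}) := lt_of_lt_of_le hpos (measure_mono (fun ω hω => ⟨hω.2.1, hω.2.2⟩))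
  have hZ'pos : 0 < P ({ω | Z ω = z'} ∩ {ω | C ω = c}) := lt_of_lt_of_le (hpos' v) (measure_mono (fun ω hω => ⟨hω.2.1, hω.2.2⟩))
  have hS0pos : 0 < P {ω | V z ω = v ∧ C ω = c} := lt_of_lt_of_le hpos (measure_mono (fun ω hω => ⟨hω.1, hω.2.2⟩))
  have tpos : ∀ S : Set Ω, 0 < P S → 0 < (P S).toReal := fun S h => ENNReal.toReal_pos h.ne' (measure_ne_top P S)
  have hrBc := tpos _ hBcpos
  have hrZ := tpos _ hZpos
  have hrZ' := tpos _ hZ'pos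
  have hrBZ := tpos _ hpos
  have hrS0 := tpos _ hS0pos
  have hrB' : ∀ v' : 𝒱, 0 < (P {ω | V z' ω = v' ∧ Z ω = z' ∧ C ω = c}).toReal := fun v' => tpos _ (hpos' v')
  have hrMA : ∀ m' : ℳ, 0 < (P ({ω | M z ω = m'} ∩ {ω | V z ω = v ∧ Z ω = z ∧ C ω = c})).toReal := fun m' => tpos _ (hposM m')
  have h1' : ∀ m' : ℳ, ∀ A : Set ℝ, MeasurableSet A → ∀ (m₁ m₂ : ℳ) (v₁ v₂ : 𝒱) (z'' : Bool),
      cProb P {ω | Y z m' ω ∈ A ∧ M z ω = m₁ ∧ M z' ω = m₂ ∧ V z ω = v₁ ∧ V z' ω = v₂ ∧ Z ω = z''} {ω | C ω = c}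
        = cProb P {ω | Y z m' ω ∈ A ∧ M z ω = m₁ ∧ M z' ω = m₂ ∧ V z ω = v₁ ∧ V z' ω = v₂} {ω | C ω = c}
          * cProb P {ω | Z ω = z''} {ω | C ω = c} :=
    fun m' A hA m₁ m₂ v₁ v₂ z'' => h1 z z' m' A hA m₁ m₂ v₁ v₂ z'' c hBcpos
  have MH1 := fun (m' : ℳ) (A : Set ℝ) (hA : MeasurableSet A) (s : Finset (ℳ × ℳ × 𝒱 × 𝒱)) (z'' : Bool) =>
    MH1lem P (M z) (M z') (V z) (V z') Z (Y z m') {ω | C ω = c} (hM z) (hM z') (hV z) (hV z') hZ (hYmeas z m') mCs hBc0 (h1' m') A hA s z''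
  have MH2 := fun (m' : ℳ) (A : Set ℝ) (hA : MeasurableSet A) (s : Finset (ℳ × ℳ)) =>
    MH2lem P (M z) (M z') (Y z m') {ω | V z ω = v ∧ Z ω = z ∧ C ω = c} (hM z) (hM z') (hYmeas z m') mBZ hpos.ne' (fun A hA m₁ m₂ => h2 z z' m' v c hpos A hA m₁ m₂) A hA s
  have mdum : ℳ := M z (nonempty_of_measure_ne_zero hpos.ne').choose
  have E1 : (P {ω | V z ω = v ∧ Z ω = z ∧ C ω = c}).toReal * (P {ω | C ω = c}).toReal = (P {ω | V z ω = v ∧ C ω = c}).toReal * (P ({ω | Z ω = z} ∩ {ω | C ω = c})).toReal := by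
    have h0 := MH1 mdum Set.univ MeasurableSet.univ ((Finset.univ : Finset ℳ) ×ˢ ((Finset.univ : Finset ℳ) ×ˢ (({v} : Finset 𝒱) ×ˢ (Finset.univ : Finset 𝒱)))) z
    simp only [Set.preimage_univ, Set.univ_inter] at h0
    rw [show {ω | (M z ω, M z' ω, V z ω, V z' ω) ∈ ((Finset.univ : Finset ℳ) ×ˢ ((Finset.univ : Finset ℳ) ×ˢ (({v} : Finset 𝒱) ×ˢ (Finset.univ : Finset 𝒱))))} ∩ ({ω | Z ω = z} ∩ {ω | C ω = c}) = {ω | V z ω = v ∧ Z ω = z ∧ C ω = c} from by ext ω; simp only [Set.mem_inter_iff, Set.mem_setOf_eq, Finset.mem_product, Finset.mem_univ, Finset.mem_singleton, true_and, and_true]; try tauto,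
        show {ω | (M z ω, M z' ω, V z ω, V z' ω) ∈ ((Finset.univ : Finset ℳ) ×ˢ ((Finset.univ : Finset ℳ) ×ˢ (({v} : Finset 𝒱) ×ˢ (Finset.univ : Finset 𝒱))))} ∩ {ω | C ω = c} = {ω | V z ω = v ∧ C ω = c} from by ext ω; simp only [Set.mem_inter_iff, Set.mem_setOf_eq, Finset.mem_product, Finset.mem_univ, Finset.mem_singleton, true_and, and_true]; try tauto] at h0
    have := congrArg ENNReal.toReal h0
    rwa [ENNReal.toReal_mul, ENNReal.toReal_mul] at this
  have E2 : ∀ m' : ℳ, (∫ ω in ({ω | M z' ω = m'} ∩ {ω | V z ω = v ∧ Z ω = z ∧ C ω = c}), Y z m' ω ∂P) * (P {ω | C ω = c}).toReal = (∫ ω in ({ω | M z' ω = m'} ∩ {ω | V z ω = v ∧ C ω = c}), Y z m' ω ∂P) * (P ({ω | Z ω = z} ∩ {ω | C ω = c})).toReal := by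
    intro m'
    refine transfer P (Y z m') (hYmeas z m') (hYint z m') _ _ _ _ (fun A hA => ?_)
    have h0 := MH1 m' A hA ((Finset.univ : Finset ℳ) ×ˢ (({m'} : Finset ℳ) ×ˢ (({v} : Finset 𝒱) ×ˢ (Finset.univ : Finset 𝒱)))) z
    rw [show {ω | (M z ω, M z' ω, V z ω, V z' ω) ∈ ((Finset.univ : Finset ℳ) ×ˢ (({m'} : Finset ℳ) ×ˢ (({v} : Finset 𝒱) ×ˢ (Finset.univ : Finset 𝒱))))} ∩ ({ω | Z ω = z} ∩ {ω | C ω = c}) = ({ω | M z' ω = m'} ∩ {ω | V z ω = v ∧ Z ω = z ∧ C ω = c}) from by ext ω; simp only [Set.mem_inter_iff, Set.mem_setOf_eq, Finset.mem_product, Finset.mem_univ, Finset.mem_singleton, true_and, and_true]; try tauto,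
        show {ω | (M z ω, M z' ω, V z ω, V z' ω) ∈ ((Finset.univ : Finset ℳ) ×ˢ (({m'} : Finset ℳ) ×ˢ (({v} : Finset 𝒱) ×ˢ (Finset.univ : Finset 𝒱))))} ∩ {ω | C ω = c} = ({ω | M z' ω = m'} ∩ {ω | V z ω = v ∧ C ω = c}) from by ext ω; simp only [Set.mem_inter_iff, Set.mem_setOf_eq, Finset.mem_product, Finset.mem_univ, Finset.mem_singleton, true_and, and_true]; try tauto] at h0
    exact h0
  have E3 : ∀ m' : ℳ, (∫ ω in ({ω | M z' ω = m'} ∩ {ω | V z ω = v ∧ Z ω = z ∧ C ω = c}), Y z m' ω ∂P) * (P {ω | V z ω = v ∧ Z ω = z ∧ C ω = c}).toReal = (∫ ω in {ω | V z ω = v ∧ Z ω = z ∧ C ω = c}, Y z m' ω ∂P) * (P ({ω | M z' ω = m'} ∩ {ω | V z ω = v ∧ Z ω = z ∧ C ω = c})).toReal := by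
    intro m'
    refine transfer P (Y z m') (hYmeas z m') (hYint z m') _ _ _ _ (fun A hA => ?_)
    have h0 := MH2 m' A hA ((Finset.univ : Finset ℳ) ×ˢ ({m'} : Finset ℳ))
    rw [show {ω | (M z ω, M z' ω) ∈ ((Finset.univ : Finset ℳ) ×ˢ ({m'} : Finset ℳ))} ∩ {ω | V z ω = v ∧ Z ω = z ∧ C ω = c} = ({ω | M z' ω = m'} ∩ {ω | V z ω = v ∧ Z ω = z ∧ C ω = c}) from by ext ω; simp only [Set.mem_inter_iff, Set.mem_setOf_eq, Finset.mem_product, Finset.mem_univ, Finset.mem_singleton, true_and, and_true]; try tauto] at h0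
    exact h0
  have E4 : ∀ m' : ℳ, (∫ ω in ({ω | M z ω = m'} ∩ {ω | V z ω = v ∧ Z ω = z ∧ C ω = c}), Y z m' ω ∂P) * (P {ω | V z ω = v ∧ Z ω = z ∧ C ω = c}).toReal = (∫ ω in {ω | V z ω = v ∧ Z ω = z ∧ C ω = c}, Y z m' ω ∂P) * (P ({ω | M z ω = m'} ∩ {ω | V z ω = v ∧ Z ω = z ∧ C ω = c})).toReal := by
    intro m'
    refine transfer P (Y z m') (hYmeas z m') (hYint z m') _ _ _ _ (fun A hA => ?_)
    have h0 := MH2 m' A hA (({m'} : Finset ℳ) ×ˢ (Finset.univ : Finset ℳ))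
    rw [show {ω | (M z ω, M z' ω) ∈ (({m'} : Finset ℳ) ×ˢ (Finset.univ : Finset ℳ))} ∩ {ω | V z ω = v ∧ Z ω = z ∧ C ω = c} = ({ω | M z ω = m'} ∩ {ω | V z ω = v ∧ Z ω = z ∧ C ω = c}) from by ext ω; simp only [Set.mem_inter_iff, Set.mem_setOf_eq, Finset.mem_product, Finset.mem_univ, Finset.mem_singleton, true_and, and_true]; try tauto] at h0
    exact h0
  have E6r : ∀ m' : ℳ, (P ({ω | M z' ω = m'} ∩ {ω | V z ω = v ∧ Z ω = z ∧ C ω = c})).toReal = ∑ v' : 𝒱, (P ({ω | V z' ω = v'} ∩ ({ω | M z' ω = m'} ∩ {ω | V z ω = v ∧ Z ω = z ∧ C ω = c}))).toReal := by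
    intro m'
    have h0 := pr_partition' P (V z') (hV z') Finset.univ ({ω | M z' ω = m'} ∩ {ω | V z ω = v ∧ Z ω = z ∧ C ω = c}) ((mMs z' m').inter mBZ)
    rw [show {ω | V z' ω ∈ Finset.univ} ∩ ({ω | M z' ω = m'} ∩ {ω | V z ω = v ∧ Z ω = z ∧ C ω = c}) = ({ω | M z' ω = m'} ∩ {ω | V z ω = v ∧ Z ω = z ∧ C ω = c}) from by ext ω; simp] at h0
    rw [← h0, ENNReal.toReal_sum (fun v' _ => measure_ne_top P _)]
  have key5 : ∀ (m' : ℳ) (v' : 𝒱), (P ({ω | V z' ω = v'} ∩ ({ω | M z' ω = m'} ∩ {ω | V z ω = v ∧ Z ω = z ∧ C ω = c}))).toReal * (P {ω | V z' ω = v' ∧ Z ω = z' ∧ C ω = c}).toReal = (P ({ω | M z' ω = m'} ∩ {ω | V z' ω = v' ∧ Z ω = z' ∧ C ω = c})).toReal * (P ({ω | V z' ω = v'} ∩ {ω | V z ω = v ∧ Z ω = z ∧ C ω = c})).toReal := by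
    intro m' v'
    have h5a := MH1 m' Set.univ MeasurableSet.univ ((Finset.univ : Finset ℳ) ×ˢ (({m'} : Finset ℳ) ×ˢ (({v} : Finset 𝒱) ×ˢ ({v'} : Finset 𝒱)))) z
    have h5b := MH1 m' Set.univ MeasurableSet.univ ((Finset.univ : Finset ℳ) ×ˢ (({m'} : Finset ℳ) ×ˢ (({v} : Finset 𝒱) ×ˢ ({v'} : Finset 𝒱)))) z'
    have h5c := MH1 m' Set.univ MeasurableSet.univ ((Finset.univ : Finset ℳ) ×ˢ ((Finset.univ : Finset ℳ) ×ˢ (({v} : Finset 𝒱) ×ˢ ({v'} : Finset 𝒱)))) z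
    have h5d := MH1 m' Set.univ MeasurableSet.univ ((Finset.univ : Finset ℳ) ×ˢ ((Finset.univ : Finset ℳ) ×ˢ (({v} : Finset 𝒱) ×ˢ ({v'} : Finset 𝒱)))) z'
    simp only [Set.preimage_univ, Set.univ_inter] at h5a h5b h5c h5d
    rw [show {ω | (M z ω, M z' ω, V z ω, V z' ω) ∈ ((Finset.univ : Finset ℳ) ×ˢ (({m'} : Finset ℳ) ×ˢ (({v} : Finset 𝒱) ×ˢ ({v'} : Finset 𝒱))))} ∩ ({ω | Z ω = z} ∩ {ω | C ω = c}) = ({ω | V z' ω = v'} ∩ ({ω | M z' ω = m'} ∩ {ω | V z ω = v ∧ Z ω = z ∧ C ω = c})) from by ext ω; simp only [Set.mem_inter_iff, Set.mem_setOf_eq, Finset.mem_product, Finset.mem_univ, Finset.mem_singleton, true_and, and_true]; try tauto] at h5a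
    rw [show {ω | (M z ω, M z' ω, V z ω, V z' ω) ∈ ((Finset.univ : Finset ℳ) ×ˢ (({m'} : Finset ℳ) ×ˢ (({v} : Finset 𝒱) ×ˢ ({v'} : Finset 𝒱))))} ∩ ({ω | Z ω = z'} ∩ {ω | C ω = c}) = ({ω | M z' ω = m' ∧ V z ω = v} ∩ {ω | V z' ω = v' ∧ Z ω = z' ∧ C ω = c}) from by ext ω; simp only [Set.mem_inter_iff, Set.mem_setOf_eq, Finset.mem_product, Finset.mem_univ, Finset.mem_singleton, true_and, and_true]; try tauto] at h5b
    rw [show {ω | (M z ω, M z' ω, V z ω, V z' ω) ∈ ((Finset.univ : Finset ℳ) ×ˢ ((Finset.univ : Finset ℳ) ×ˢ (({v} : Finset 𝒱) ×ˢ ({v'} : Finset 𝒱))))} ∩ ({ω | Z ω = z} ∩ {ω | C ω = c}) = ({ω | V z' ω = v'} ∩ {ω | V z ω = v ∧ Z ω = z ∧ C ω = c}) from by ext ω; simp only [Set.mem_inter_iff, Set.mem_setOf_eq, Finset.mem_product, Finset.mem_univ, Finset.mem_singleton, true_and, and_true]; try tauto] at h5c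
    rw [show {ω | (M z ω, M z' ω, V z ω, V z' ω) ∈ ((Finset.univ : Finset ℳ) ×ˢ ((Finset.univ : Finset ℳ) ×ˢ (({v} : Finset 𝒱) ×ˢ ({v'} : Finset 𝒱))))} ∩ ({ω | Z ω = z'} ∩ {ω | C ω = c}) = ({ω | V z ω = v} ∩ {ω | V z' ω = v' ∧ Z ω = z' ∧ C ω = c}) from by ext ω; simp only [Set.mem_inter_iff, Set.mem_setOf_eq, Finset.mem_product, Finset.mem_univ, Finset.mem_singleton, true_and, and_true]; try tauto] at h5d
    have h5e := cProb_mul_eq P (hpos' v').ne' (h3 v' c (hpos' v') m' v)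
    have r5a := congrArg ENNReal.toReal h5a
    have r5b := congrArg ENNReal.toReal h5b
    have r5c := congrArg ENNReal.toReal h5c
    have r5d := congrArg ENNReal.toReal h5d
    have r5e := congrArg ENNReal.toReal h5e
    rw [ENNReal.toReal_mul, ENNReal.toReal_mul] at r5a r5b r5c r5d r5e
    have c1 : (P {ω | C ω = c}).toReal * ((P ({ω | V z' ω = v'} ∩ ({ω | M z' ω = m'} ∩ {ω | V z ω = v ∧ Z ω = z ∧ C ω = c}))).toReal * (P ({ω | Z ω = z'} ∩ {ω | C ω = c})).toReal) = (P {ω | C ω = c}).toReal * ((P ({ω | M z' ω = m' ∧ V z ω = v} ∩ {ω | V z' ω = v' ∧ Z ω = z' ∧ C ω = c})).toReal * (P ({ω | Z ω = z} ∩ {ω | C ω = c})).toReal) := by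
      linear_combination (P ({ω | Z ω = z'} ∩ {ω | C ω = c})).toReal * r5a - (P ({ω | Z ω = z} ∩ {ω | C ω = c})).toReal * r5b
    have c1' := mul_left_cancel₀ hrBc.ne' c1
    have c2 : (P {ω | C ω = c}).toReal * ((P ({ω | V z' ω = v'} ∩ {ω | V z ω = v ∧ Z ω = z ∧ C ω = c})).toReal * (P ({ω | Z ω = z'} ∩ {ω | C ω = c})).toReal) = (P {ω | C ω = c}).toReal * ((P ({ω | V z ω = v} ∩ {ω | V z' ω = v' ∧ Z ω = z' ∧ C ω = c})).toReal * (P ({ω | Z ω = z} ∩ {ω | C ω = c})).toReal) := by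
      linear_combination (P ({ω | Z ω = z'} ∩ {ω | C ω = c})).toReal * r5c - (P ({ω | Z ω = z} ∩ {ω | C ω = c})).toReal * r5d
    have c2' := mul_left_cancel₀ hrBc.ne' c2
    have c3 : (P ({ω | Z ω = z'} ∩ {ω | C ω = c})).toReal * ((P ({ω | V z' ω = v'} ∩ ({ω | M z' ω = m'} ∩ {ω | V z ω = v ∧ Z ω = z ∧ C ω = c}))).toReal * (P {ω | V z' ω = v' ∧ Z ω = z' ∧ C ω = c}).toReal) = (P ({ω | Z ω = z'} ∩ {ω | C ω = c})).toReal * ((P ({ω | M z' ω = m'} ∩ {ω | V z' ω = v' ∧ Z ω = z' ∧ C ω = c})).toReal * (P ({ω | V z' ω = v'} ∩ {ω | V z ω = v ∧ Z ω = z ∧ C ω = c})).toReal) := by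
      linear_combination (P {ω | V z' ω = v' ∧ Z ω = z' ∧ C ω = c}).toReal * c1' + (P ({ω | Z ω = z} ∩ {ω | C ω = c})).toReal * r5e - (P ({ω | M z' ω = m'} ∩ {ω | V z' ω = v' ∧ Z ω = z' ∧ C ω = c})).toReal * c2'
    exact mul_left_cancel₀ hrZ'.ne' c3
  have hcr_eq : (fun ω => Y z (M z' ω) ω) = fun ω => ∑ m' : ℳ, ({ω' | M z' ω' = m'}).indicator (Y z m') ω := by
    funext ω
    rw [Finset.sum_eq_single (M z' ω)]
    · exact (Set.indicator_of_mem (show ω ∈ {ω' | M z' ω' = M z' ω} from rfl) (Y z (M z' ω))).symm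
    · intro b _ hb
      exact Set.indicator_of_notMem
        (show ω ∉ {ω' | M z' ω' = b} from fun hmem => hb (Eq.symm hmem)) (Y z b)
    · intro h; exact absurd (Finset.mem_univ _) h
  have hcrossint : Integrable (fun ω => Y z (M z' ω) ω) P := by
    rw [hcr_eq]
    exact integrable_finset_sum _ fun m' _ => (hYint z m').indicator (mMs z' m')
  have hun : {ω | V z ω = v ∧ C ω = c} = ⋃ m' : ℳ, ({ω | M z' ω = m'} ∩ {ω | V z ω = v ∧ C ω = c}) := by ext ω; simp
  have hdec : (∫ ω in {ω | V z ω = v ∧ C ω = c}, Y z (M z' ω) ω ∂P) = ∑ m' : ℳ, ∫ ω in ({ω | M z' ω = m'} ∩ {ω | V z ω = v ∧ C ω = c}), Y z m' ω ∂P := by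
    have hd : Pairwise (Function.onFun Disjoint fun m' : ℳ => {ω | M z' ω = m'} ∩ {ω | V z ω = v ∧ C ω = c}) := by
      intro i j hij
      simp only [Function.onFun, Set.disjoint_left, Set.mem_inter_iff, Set.mem_setOf_eq]
      rintro ω ⟨rfl, -⟩ ⟨h2, -⟩
      exact hij h2
    have hI := integral_iUnion (μ := P) (f := fun ω => Y z (M z' ω) ω)
      (fun m' : ℳ => (mMs z' m').inter mS0) hd hcrossint.integrableOn
    rw [tsum_fintype, ← hun] at hI
    rw [hI]
    refine Finset.sum_congr rfl fun m' _ => setIntegral_congr_fun ((mMs z' m').inter mS0) fun ω hω => ?_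
    have hm : M z' ω = m' := hω.1
    simp only [hm]
  have hL : cExp P (fun ω => Y z (M z' ω) ω) {ω | V z ω = v ∧ C ω = c} = ∑ m' : ℳ, ∑ v' : 𝒱, (P ({ω | M z' ω = m'} ∩ {ω | V z' ω = v' ∧ Z ω = z' ∧ C ω = c})).toReal * (∫ ω in {ω | V z ω = v ∧ Z ω = z ∧ C ω = c}, Y z m' ω ∂P) * (P ({ω | V z' ω = v'} ∩ {ω | V z ω = v ∧ Z ω = z ∧ C ω = c})).toReal / ((P {ω | V z' ω = v' ∧ Z ω = z' ∧ C ω = c}).toReal * (P {ω | V z ω = v ∧ Z ω = z ∧ C ω = c}).toReal ^ 2) := by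
    rw [cExp, hdec, Finset.sum_div]
    refine Finset.sum_congr rfl fun m' _ => ?_
    have step1 : (∫ ω in ({ω | M z' ω = m'} ∩ {ω | V z ω = v ∧ C ω = c}), Y z m' ω ∂P) / (P {ω | V z ω = v ∧ C ω = c}).toReal = (∫ ω in {ω | V z ω = v ∧ Z ω = z ∧ C ω = c}, Y z m' ω ∂P) * (P ({ω | M z' ω = m'} ∩ {ω | V z ω = v ∧ Z ω = z ∧ C ω = c})).toReal / (P {ω | V z ω = v ∧ Z ω = z ∧ C ω = c}).toReal ^ 2 := by
      rw [div_eq_div_iff hrS0.ne' (by positivity)]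
      have hc : (P ({ω | Z ω = z} ∩ {ω | C ω = c})).toReal * ((∫ ω in ({ω | M z' ω = m'} ∩ {ω | V z ω = v ∧ C ω = c}), Y z m' ω ∂P) * (P {ω | V z ω = v ∧ Z ω = z ∧ C ω = c}).toReal ^ 2) = (P ({ω | Z ω = z} ∩ {ω | C ω = c})).toReal * ((∫ ω in {ω | V z ω = v ∧ Z ω = z ∧ C ω = c}, Y z m' ω ∂P) * (P ({ω | M z' ω = m'} ∩ {ω | V z ω = v ∧ Z ω = z ∧ C ω = c})).toReal * (P {ω | V z ω = v ∧ C ω = c}).toReal) := by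
        linear_combination (-((P {ω | V z ω = v ∧ Z ω = z ∧ C ω = c}).toReal ^ 2)) * E2 m' + ((P {ω | C ω = c}).toReal * (P {ω | V z ω = v ∧ Z ω = z ∧ C ω = c}).toReal) * E3 m' + ((∫ ω in {ω | V z ω = v ∧ Z ω = z ∧ C ω = c}, Y z m' ω ∂P) * (P ({ω | M z' ω = m'} ∩ {ω | V z ω = v ∧ Z ω = z ∧ C ω = c})).toReal) * E1
      exact mul_left_cancel₀ hrZ.ne' hc
    rw [step1, E6r m', Finset.mul_sum, Finset.sum_div]
    refine Finset.sum_congr rfl fun v' _ => ?_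
    have haa : (P ({ω | V z' ω = v'} ∩ ({ω | M z' ω = m'} ∩ {ω | V z ω = v ∧ Z ω = z ∧ C ω = c}))).toReal = (P ({ω | M z' ω = m'} ∩ {ω | V z' ω = v' ∧ Z ω = z' ∧ C ω = c})).toReal * (P ({ω | V z' ω = v'} ∩ {ω | V z ω = v ∧ Z ω = z ∧ C ω = c})).toReal / (P {ω | V z' ω = v' ∧ Z ω = z' ∧ C ω = c}).toReal := by
      rw [eq_div_iff (hrB' v').ne']
      exact key5 m' v'
    rw [haa]
    field_simp
  rw [hL, Finset.sum_comm]
  refine Finset.sum_congr rfl fun v' _ => Finset.sum_congr rfl fun m' _ => ?_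
  simp only [cExp, cProb]
  rw [show {ω | M z ω = m' ∧ V z ω = v ∧ Z ω = z ∧ C ω = c} = ({ω | M z ω = m'} ∩ {ω | V z ω = v ∧ Z ω = z ∧ C ω = c}) from by ext ω; simp only [Set.mem_inter_iff, Set.mem_setOf_eq]; try tauto]
  rw [show (∫ ω in ({ω | M z ω = m'} ∩ {ω | V z ω = v ∧ Z ω = z ∧ C ω = c}), Y z m' ω ∂P) = (∫ ω in {ω | V z ω = v ∧ Z ω = z ∧ C ω = c}, Y z m' ω ∂P) * (P ({ω | M z ω = m'} ∩ {ω | V z ω = v ∧ Z ω = z ∧ C ω = c})).toReal / (P {ω | V z ω = v ∧ Z ω = z ∧ C ω = c}).toReal from by rw [eq_div_iff hrBZ.ne']; exact E4 m']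
  have h1 := (hrMA m').ne'
  have h2 := (hrB' v').ne'
  have h3 := hrBZ.ne'
  field_simp
end

section
/- Fix z, z' ∈ {0,1} with z ≠ z'. Assume Assumptions (1), (2) and (3), and assume the consistency relations V = Z·V₁ + (1−Z)·V₀, M = Z·M₁ + (1−Z)·M₀ and Y = Z·Y_{1,M₁} + (1−Z)·Y_{0,M₀} (where Y_{z,M_z}(ω) = Y_{z,M_z(ω)}(ω)). Fix v ∈ 𝒱 and c ∈ 𝒞 such that P(V_z = v, Z = z, C = c) > 0, such that P(V_{z'} = v', Z = z', C = c) > 0 for every v' ∈ 𝒱, and such that P(M = m', V = v, Z = z, C = c) > 0 and P(M = m', V = v', Z = z', C = c) > 0 for every m' ∈ ℳ and v' ∈ 𝒱. Then E[Y_{z,M_{z'}} | V_z = v, C = c] = Σ_{v' ∈ 𝒱} Σ_{m' ∈ ℳ} E[Y | M = m', V = v, Z = z, C = c] · P(M = m' | V = v', Z = z', C = c) · P(V_{z'} = v' | V_z = v, Z = z, C = c); in particular, every factor except the cross-world conditional probability P(V_{z'} = v' | V_z = v, Z = z, C = c) is a functional of the joint distribution of the observed data (Y, M, V, Z, C). 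-/
open MeasureTheory ProbabilityTheory

section Helpers
variable {Ω : Type*} [MeasurableSpace Ω] (P : Measure Ω) [IsProbabilityMeasure P]

lemma fiberSum_measure {α : Type*} [Fintype α] [MeasurableSpace α] [MeasurableSingletonClass α]
    {W : Ω → α} (hW : Measurable W) {T : Set Ω} (hT : MeasurableSet T) :
    (P T).toReal = ∑ a : α, (P (T ∩ {ω | W ω = a})).toReal := by
  have hTeq : T = ⋃ a : α, T ∩ {ω | W ω = a} := by
    ext ω; simp
  have hdisj : Pairwise (Function.onFun Disjoint fun a : α => T ∩ {ω | W ω = a}) := by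
    intro a b hab
    simp only [Function.onFun, Set.disjoint_left]
    rintro ω ⟨-, ha⟩ ⟨-, hb⟩
    exact hab (ha.symm.trans hb)
  have hmeas : ∀ a : α, MeasurableSet (T ∩ {ω | W ω = a}) :=
    fun a => hT.inter (hW (measurableSet_singleton a))
  conv_lhs => rw [hTeq]
  rw [measure_iUnion hdisj hmeas, tsum_fintype,
    ENNReal.toReal_sum (fun a _ => measure_ne_top P _)]

omit [IsProbabilityMeasure P] in
lemma fiberSum_integral {α : Type*} [Fintype α] [MeasurableSpace α] [MeasurableSingletonClass α]
    {W : Ω → α} (hW : Measurable W) {T : Set Ω} (hT : MeasurableSet T)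
    {X : Ω → ℝ} (hXi : Integrable X P) :
    ∫ ω in T, X ω ∂P = ∑ a : α, ∫ ω in T ∩ {ω | W ω = a}, X ω ∂P := by
  have hTeq : T = ⋃ a : α, T ∩ {ω | W ω = a} := by
    ext ω; simp
  have hdisj : Pairwise (Function.onFun Disjoint fun a : α => T ∩ {ω | W ω = a}) := by
    intro a b hab
    simp only [Function.onFun, Set.disjoint_left]
    rintro ω ⟨-, ha⟩ ⟨-, hb⟩
    exact hab (ha.symm.trans hb)
  have hmeas : ∀ a : α, MeasurableSet (T ∩ {ω | W ω = a}) :=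
    fun a => hT.inter (hW (measurableSet_singleton a))
  conv_lhs => rw [hTeq]
  rw [integral_iUnion hmeas hdisj (hXi.integrableOn), tsum_fintype]

lemma integral_eq_of_fibers {X : Ω → ℝ} (hX : Measurable X)
    {B₁ B₂ : Set Ω} {r : ℝ} (hr : 0 ≤ r)
    (h : ∀ A : Set ℝ, MeasurableSet A →
      (P (X ⁻¹' A ∩ B₁)).toReal = r * (P (X ⁻¹' A ∩ B₂)).toReal) :
    ∫ ω in B₁, X ω ∂P = r * ∫ ω in B₂, X ω ∂P := by
  have hmap : Measure.map X (P.restrict B₁)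
      = (ENNReal.ofReal r) • Measure.map X (P.restrict B₂) := by
    ext A hA
    rw [Measure.map_apply hX hA, Measure.smul_apply, Measure.map_apply hX hA,
      Measure.restrict_apply (hX hA), Measure.restrict_apply (hX hA)]
    have h1 := h A hA
    have hne1 : P (X ⁻¹' A ∩ B₁) ≠ ⊤ := measure_ne_top P _
    have hne2 : P (X ⁻¹' A ∩ B₂) ≠ ⊤ := measure_ne_top P _
    have heq : (P (X ⁻¹' A ∩ B₁)).toReal
        = ((ENNReal.ofReal r) * P (X ⁻¹' A ∩ B₂)).toReal := by
      rw [ENNReal.toReal_mul, ENNReal.toReal_ofReal hr]; exact h1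
    have hne3 : (ENNReal.ofReal r) * P (X ⁻¹' A ∩ B₂) ≠ ⊤ :=
      ENNReal.mul_ne_top ENNReal.ofReal_ne_top hne2
    exact (ENNReal.toReal_eq_toReal_iff' hne1 hne3).mp heq
  have e1 : ∫ ω in B₁, X ω ∂P = ∫ y, y ∂(Measure.map X (P.restrict B₁)) :=
    (integral_map hX.aemeasurable measurable_id.aestronglyMeasurable).symm
  have e2 : ∫ ω in B₂, X ω ∂P = ∫ y, y ∂(Measure.map X (P.restrict B₂)) :=
    (integral_map hX.aemeasurable measurable_id.aestronglyMeasurable).symm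
  rw [e1, e2, hmap, integral_smul_measure, ENNReal.toReal_ofReal hr, smul_eq_mul]

end Helpers

lemma cProb_clear {Ω : Type*} [MeasurableSpace Ω] (P : Measure Ω) [IsProbabilityMeasure P]
    {A₁ A₂ A₃ B : Set Ω} (hB : 0 < (P B).toReal)
    (h : cProb P A₁ B = cProb P A₂ B * cProb P A₃ B) :
    (P (A₁ ∩ B)).toReal * (P B).toReal = (P (A₂ ∩ B)).toReal * (P (A₃ ∩ B)).toReal := by
  unfold cProb at h
  have hB0 : (P B).toReal ≠ 0 := hB.ne'
  field_simp at h
  apply mul_right_cancel₀ hB0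
  linear_combination (P B).toReal * h


lemma frac_chain {IT ITz IB ID g qz pB pD pTz : ℝ} (hg : 0 < g) (hqz : 0 < qz)
    (hpB : 0 < pB) (hpD : 0 < pD)
    (e1 : ITz = qz / g * IT) (e2 : ITz = pTz / pB * IB) (e3 : ID = pD / pB * IB) :
    IT / (pB * g / qz) = ID / pD * (pTz / pB) := by
  have h1 : IT = g / qz * ITz := by
    rw [e1]; field_simp
  have h2 : IB = pB / pD * ID := by
    rw [e3]; field_simp
  rw [h1, e2, h2]
  field_simp

lemma div_solve {a b c d : ℝ} (hd : 0 < d) (h : a * b = c * d) : c = a * b / d := by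
  field_simp
  linarith

/-- Observed-data identification of the cross-world mean: under Assumptions (1), (2), (3) and
the consistency relations `V = V_Z`, `M = M_Z`, `Y = Y_{Z, M_Z}`, the cross-world mean
`E[Y_{z, M_{z'}} | V_z = v, C = c]` equals a functional of the joint distribution of the
observed data `(Y, M, V, Z, C)` together with the cross-world conditional probability
`P(V_{z'} = v' | V_z = v, Z = z, C = c)`. -/
theorem crossworld_mean_observed_data_identification
    {Ω 𝒱 ℳ 𝒞 : Type*} [MeasurableSpace Ω]
    [Fintype 𝒱] [MeasurableSpace 𝒱] [MeasurableSingletonClass 𝒱]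
    [Fintype ℳ] [MeasurableSpace ℳ] [MeasurableSingletonClass ℳ]
    [Fintype 𝒞] [MeasurableSpace 𝒞] [MeasurableSingletonClass 𝒞]
    (P : Measure Ω) [IsProbabilityMeasure P]
    (Z : Ω → Bool) (C : Ω → 𝒞) (V : Bool → Ω → 𝒱) (M : Bool → Ω → ℳ)
    (Y : Bool → ℳ → Ω → ℝ)
    (Vobs : Ω → 𝒱) (Mobs : Ω → ℳ) (Yobs : Ω → ℝ)
    (hZ : Measurable Z) (hC : Measurable C)
    (hV : ∀ zb, Measurable (V zb)) (hM : ∀ zb, Measurable (M zb))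
    (hYmeas : ∀ zb m, Measurable (Y zb m)) (hYint : ∀ zb m, Integrable (Y zb m) P)
    -- consistency: `V = Z·V₁ + (1−Z)·V₀`, `M = Z·M₁ + (1−Z)·M₀`, `Y = Z·Y_{1,M₁} + (1−Z)·Y_{0,M₀}`
    (hVc : ∀ ω, Vobs ω = V (Z ω) ω)
    (hMc : ∀ ω, Mobs ω = M (Z ω) ω)
    (hYc : ∀ ω, Yobs ω = Y (Z ω) (M (Z ω) ω) ω)
    (z z' : Bool) (hzz' : z ≠ z')
    -- Assumption (1): ignorable treatment assignment given baseline confounders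
    (h1 : ∀ (za zb : Bool) (m : ℳ), ∀ A : Set ℝ, MeasurableSet A →
      ∀ (m₁ m₂ : ℳ) (v₁ v₂ : 𝒱) (z'' : Bool) (c : 𝒞),
      0 < P {ω | C ω = c} →
      cProb P {ω | Y za m ω ∈ A ∧ M za ω = m₁ ∧ M zb ω = m₂ ∧ V za ω = v₁ ∧ V zb ω = v₂
                    ∧ Z ω = z''} {ω | C ω = c}
        = cProb P {ω | Y za m ω ∈ A ∧ M za ω = m₁ ∧ M zb ω = m₂ ∧ V za ω = v₁ ∧ V zb ω = v₂}
            {ω | C ω = c}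
          * cProb P {ω | Z ω = z''} {ω | C ω = c})
    -- Assumption (2): ignorable mediator value assignment given baseline confounders
    -- and the post-treatment confounder
    (h2 : ∀ (za zb : Bool) (m : ℳ) (v₀ : 𝒱) (c : 𝒞),
      0 < P {ω | V za ω = v₀ ∧ Z ω = za ∧ C ω = c} →
      ∀ A : Set ℝ, MeasurableSet A → ∀ (m₁ m₂ : ℳ),
      cProb P {ω | Y za m ω ∈ A ∧ M za ω = m₁ ∧ M zb ω = m₂}
          {ω | V za ω = v₀ ∧ Z ω = za ∧ C ω = c}
        = cProb P {ω | Y za m ω ∈ A} {ω | V za ω = v₀ ∧ Z ω = za ∧ C ω = c}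
          * cProb P {ω | M za ω = m₁ ∧ M zb ω = m₂} {ω | V za ω = v₀ ∧ Z ω = za ∧ C ω = c})
    -- Assumption (3): conditional cross-world independence of `V_z` and `M_{z'}`
    (h3 : ∀ (v' : 𝒱) (c : 𝒞),
      0 < P {ω | V z' ω = v' ∧ Z ω = z' ∧ C ω = c} →
      ∀ (m' : ℳ) (v : 𝒱),
      cProb P {ω | M z' ω = m' ∧ V z ω = v} {ω | V z' ω = v' ∧ Z ω = z' ∧ C ω = c}
        = cProb P {ω | M z' ω = m'} {ω | V z' ω = v' ∧ Z ω = z' ∧ C ω = c}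
          * cProb P {ω | V z ω = v} {ω | V z' ω = v' ∧ Z ω = z' ∧ C ω = c})
    (v : 𝒱) (c : 𝒞)
    (hpos : 0 < P {ω | V z ω = v ∧ Z ω = z ∧ C ω = c})
    (hpos' : ∀ v' : 𝒱, 0 < P {ω | V z' ω = v' ∧ Z ω = z' ∧ C ω = c})
    (hposM : ∀ m' : ℳ, 0 < P {ω | Mobs ω = m' ∧ Vobs ω = v ∧ Z ω = z ∧ C ω = c})
    (hposM' : ∀ (m' : ℳ) (v' : 𝒱),
      0 < P {ω | Mobs ω = m' ∧ Vobs ω = v' ∧ Z ω = z' ∧ C ω = c}) :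
    cExp P (fun ω => Y z (M z' ω) ω) {ω | V z ω = v ∧ C ω = c}
      = ∑ v' : 𝒱, ∑ m' : ℳ,
          cExp P Yobs {ω | Mobs ω = m' ∧ Vobs ω = v ∧ Z ω = z ∧ C ω = c}
            * cProb P {ω | Mobs ω = m'} {ω | Vobs ω = v' ∧ Z ω = z' ∧ C ω = c}
            * cProb P {ω | V z' ω = v'} {ω | V z ω = v ∧ Z ω = z ∧ C ω = c} := by
  classical
  -- positivity facts
  have tpos : ∀ {S : Set Ω}, 0 < P S → 0 < (P S).toReal :=
    fun h => ENNReal.toReal_pos h.ne' (measure_ne_top P _)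
  have hPGc : 0 < P {ω | C ω = c} :=
    lt_of_lt_of_le hpos (measure_mono fun ω h => h.2.2)
  have hg : 0 < (P {ω | C ω = c}).toReal := tpos hPGc
  have hpB : 0 < (P {ω | V z ω = v ∧ Z ω = z ∧ C ω = c}).toReal := tpos hpos
  have hpB' : ∀ v' : 𝒱, 0 < (P {ω | V z' ω = v' ∧ Z ω = z' ∧ C ω = c}).toReal :=
    fun v' => tpos (hpos' v')
  have hqz : 0 < (P {ω | Z ω = z ∧ C ω = c}).toReal :=
    tpos (lt_of_lt_of_le hpos (measure_mono fun ω h => ⟨h.2.1, h.2.2⟩))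
  have hqz' : 0 < (P {ω | Z ω = z' ∧ C ω = c}).toReal :=
    tpos (lt_of_lt_of_le (hpos' v) (measure_mono fun ω h => ⟨h.2.1, h.2.2⟩))
  -- consistency set equalities
  have eqD : ∀ m' : ℳ, {ω | Mobs ω = m' ∧ Vobs ω = v ∧ Z ω = z ∧ C ω = c}
      = {ω | M z ω = m' ∧ V z ω = v ∧ Z ω = z ∧ C ω = c} := by
    intro m'; ext ω
    simp only [Set.mem_setOf_eq, hMc ω, hVc ω]
    constructor
    · rintro ⟨a, b, hzz, hc⟩; rw [hzz] at a b; exact ⟨a, b, hzz, hc⟩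
    · rintro ⟨a, b, hzz, hc⟩; rw [hzz]; exact ⟨a, b, rfl, hc⟩
  have eqB' : ∀ v' : 𝒱, {ω | Vobs ω = v' ∧ Z ω = z' ∧ C ω = c}
      = {ω | V z' ω = v' ∧ Z ω = z' ∧ C ω = c} := by
    intro v'; ext ω
    simp only [Set.mem_setOf_eq, hVc ω]
    constructor
    · rintro ⟨a, hzz, hc⟩; rw [hzz] at a; exact ⟨a, hzz, hc⟩
    · rintro ⟨a, hzz, hc⟩; rw [hzz]; exact ⟨a, rfl, hc⟩
  have eqMB' : ∀ (m' : ℳ) (v' : 𝒱),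
      {ω | Mobs ω = m'} ∩ {ω | Vobs ω = v' ∧ Z ω = z' ∧ C ω = c}
        = {ω | M z' ω = m' ∧ V z' ω = v' ∧ Z ω = z' ∧ C ω = c} := by
    intro m' v'; ext ω
    simp only [Set.mem_inter_iff, Set.mem_setOf_eq, hMc ω, hVc ω]
    constructor
    · rintro ⟨a, b, hzz, hc⟩; rw [hzz] at a b; exact ⟨a, b, hzz, hc⟩
    · rintro ⟨a, b, hzz, hc⟩; rw [hzz]; exact ⟨a, b, rfl, hc⟩
  have hpD : ∀ m' : ℳ, 0 < (P {ω | M z ω = m' ∧ V z ω = v ∧ Z ω = z ∧ C ω = c}).toReal :=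
    fun m' => tpos (by rw [← eqD m']; exact hposM m')
  -- measurability
  have msC : MeasurableSet {ω | C ω = c} := hC (measurableSet_singleton c)
  have msB : MeasurableSet {ω | V z ω = v ∧ Z ω = z ∧ C ω = c} :=
    (hV z (measurableSet_singleton v)).inter ((hZ (measurableSet_singleton z)).inter msC)
  have msBz : ∀ zb : Bool, MeasurableSet {ω | V z ω = v ∧ Z ω = zb ∧ C ω = c} :=
    fun zb => (hV z (measurableSet_singleton v)).inter
      ((hZ (measurableSet_singleton zb)).inter msC)
  have msU : MeasurableSet {ω | V z ω = v ∧ C ω = c} :=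
    (hV z (measurableSet_singleton v)).inter msC
  have msT : ∀ m' : ℳ, MeasurableSet {ω | M z' ω = m' ∧ V z ω = v ∧ C ω = c} :=
    fun m' => (hM z' (measurableSet_singleton m')).inter msU
  have msTz : ∀ m' : ℳ, MeasurableSet {ω | M z' ω = m' ∧ V z ω = v ∧ Z ω = z ∧ C ω = c} :=
    fun m' => (hM z' (measurableSet_singleton m')).inter msB
  have msD : ∀ m' : ℳ, MeasurableSet {ω | M z ω = m' ∧ V z ω = v ∧ Z ω = z ∧ C ω = c} :=
    fun m' => (hM z (measurableSet_singleton m')).inter msB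
  have msEE : ∀ (m' : ℳ) (v' : 𝒱) (zb : Bool),
      MeasurableSet {ω | M z' ω = m' ∧ V z ω = v ∧ V z' ω = v' ∧ Z ω = zb ∧ C ω = c} :=
    fun m' v' zb => (hM z' (measurableSet_singleton m')).inter
      ((hV z (measurableSet_singleton v)).inter ((hV z' (measurableSet_singleton v')).inter
        ((hZ (measurableSet_singleton zb)).inter msC)))
  have msE0 : ∀ (m' : ℳ) (v' : 𝒱),
      MeasurableSet {ω | M z' ω = m' ∧ V z ω = v ∧ V z' ω = v' ∧ C ω = c} :=
    fun m' v' => (hM z' (measurableSet_singleton m')).inter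
      ((hV z (measurableSet_singleton v)).inter ((hV z' (measurableSet_singleton v')).inter msC))
  have msFF : ∀ (v' : 𝒱) (zb : Bool),
      MeasurableSet {ω | V z ω = v ∧ V z' ω = v' ∧ Z ω = zb ∧ C ω = c} :=
    fun v' zb => (hV z (measurableSet_singleton v)).inter
      ((hV z' (measurableSet_singleton v')).inter ((hZ (measurableSet_singleton zb)).inter msC))
  have msF0 : ∀ v' : 𝒱, MeasurableSet {ω | V z ω = v ∧ V z' ω = v' ∧ C ω = c} :=
    fun v' => (hV z (measurableSet_singleton v)).inter
      ((hV z' (measurableSet_singleton v')).inter msC)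
  -- Assumption 1, cleared and marginalized
  have keyE : ∀ (m' : ℳ) (v' : 𝒱) (zb : Bool),
      (P {ω | M z' ω = m' ∧ V z ω = v ∧ V z' ω = v' ∧ Z ω = zb ∧ C ω = c}).toReal
          * (P {ω | C ω = c}).toReal
        = (P {ω | M z' ω = m' ∧ V z ω = v ∧ V z' ω = v' ∧ C ω = c}).toReal
          * (P {ω | Z ω = zb ∧ C ω = c}).toReal := by
    intro m' v' zb
    rw [fiberSum_measure P (hM z) (msEE m' v' zb), fiberSum_measure P (hM z) (msE0 m' v'),
      Finset.sum_mul, Finset.sum_mul]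
    refine Finset.sum_congr rfl fun m₁ _ => ?_
    have h := cProb_clear P hg (h1 z z' m' Set.univ MeasurableSet.univ m₁ m' v v' zb c hPGc)
    have e1 : {ω | M z' ω = m' ∧ V z ω = v ∧ V z' ω = v' ∧ Z ω = zb ∧ C ω = c}
          ∩ {ω | M z ω = m₁}
        = {ω | Y z m' ω ∈ Set.univ ∧ M z ω = m₁ ∧ M z' ω = m' ∧ V z ω = v ∧ V z' ω = v'
            ∧ Z ω = zb} ∩ {ω | C ω = c} := by
      ext ω
      simp only [Set.mem_inter_iff, Set.mem_setOf_eq, Set.mem_univ, true_and]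
      tauto
    have e2 : {ω | M z' ω = m' ∧ V z ω = v ∧ V z' ω = v' ∧ C ω = c} ∩ {ω | M z ω = m₁}
        = {ω | Y z m' ω ∈ Set.univ ∧ M z ω = m₁ ∧ M z' ω = m' ∧ V z ω = v ∧ V z' ω = v'}
            ∩ {ω | C ω = c} := by
      ext ω
      simp only [Set.mem_inter_iff, Set.mem_setOf_eq, Set.mem_univ, true_and]
      tauto
    rw [e1, e2]
    exact h
  have keyF : ∀ (v' : 𝒱) (zb : Bool),
      (P {ω | V z ω = v ∧ V z' ω = v' ∧ Z ω = zb ∧ C ω = c}).toReal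
          * (P {ω | C ω = c}).toReal
        = (P {ω | V z ω = v ∧ V z' ω = v' ∧ C ω = c}).toReal
          * (P {ω | Z ω = zb ∧ C ω = c}).toReal := by
    intro v' zb
    rw [fiberSum_measure P (hM z') (msFF v' zb), fiberSum_measure P (hM z') (msF0 v'),
      Finset.sum_mul, Finset.sum_mul]
    refine Finset.sum_congr rfl fun m' _ => ?_
    have e1 : {ω | V z ω = v ∧ V z' ω = v' ∧ Z ω = zb ∧ C ω = c} ∩ {ω | M z' ω = m'}
        = {ω | M z' ω = m' ∧ V z ω = v ∧ V z' ω = v' ∧ Z ω = zb ∧ C ω = c} := by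
      ext ω; simp only [Set.mem_inter_iff, Set.mem_setOf_eq]; tauto
    have e2 : {ω | V z ω = v ∧ V z' ω = v' ∧ C ω = c} ∩ {ω | M z' ω = m'}
        = {ω | M z' ω = m' ∧ V z ω = v ∧ V z' ω = v' ∧ C ω = c} := by
      ext ω; simp only [Set.mem_inter_iff, Set.mem_setOf_eq]; tauto
    rw [e1, e2]
    exact keyE m' v' zb
  have keyU : ∀ zb : Bool,
      (P {ω | V z ω = v ∧ Z ω = zb ∧ C ω = c}).toReal * (P {ω | C ω = c}).toReal
        = (P {ω | V z ω = v ∧ C ω = c}).toReal * (P {ω | Z ω = zb ∧ C ω = c}).toReal := by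
    intro zb
    rw [fiberSum_measure P (hV z') (msBz zb), fiberSum_measure P (hV z') msU,
      Finset.sum_mul, Finset.sum_mul]
    refine Finset.sum_congr rfl fun v' _ => ?_
    have e1 : {ω | V z ω = v ∧ Z ω = zb ∧ C ω = c} ∩ {ω | V z' ω = v'}
        = {ω | V z ω = v ∧ V z' ω = v' ∧ Z ω = zb ∧ C ω = c} := by
      ext ω; simp only [Set.mem_inter_iff, Set.mem_setOf_eq]; tauto
    have e2 : {ω | V z ω = v ∧ C ω = c} ∩ {ω | V z' ω = v'}
        = {ω | V z ω = v ∧ V z' ω = v' ∧ C ω = c} := by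
      ext ω; simp only [Set.mem_inter_iff, Set.mem_setOf_eq]; tauto
    rw [e1, e2]
    exact keyF v' zb
  have keyA : ∀ (m' : ℳ) (A : Set ℝ), MeasurableSet A →
      (P (Y z m' ⁻¹' A ∩ {ω | M z' ω = m' ∧ V z ω = v ∧ Z ω = z ∧ C ω = c})).toReal
          * (P {ω | C ω = c}).toReal
        = (P (Y z m' ⁻¹' A ∩ {ω | M z' ω = m' ∧ V z ω = v ∧ C ω = c})).toReal
          * (P {ω | Z ω = z ∧ C ω = c}).toReal := by
    intro m' A hA
    have hW : Measurable (fun ω => (M z ω, V z' ω)) := (hM z).prodMk (hV z')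
    rw [fiberSum_measure P hW ((hYmeas z m' hA).inter (msTz m')),
      fiberSum_measure P hW ((hYmeas z m' hA).inter (msT m')),
      Finset.sum_mul, Finset.sum_mul]
    refine Finset.sum_congr rfl fun q _ => ?_
    have h := cProb_clear P hg (h1 z z' m' A hA q.1 m' v q.2 z c hPGc)
    have e1 : Y z m' ⁻¹' A ∩ {ω | M z' ω = m' ∧ V z ω = v ∧ Z ω = z ∧ C ω = c}
          ∩ {ω | (M z ω, V z' ω) = q}
        = {ω | Y z m' ω ∈ A ∧ M z ω = q.1 ∧ M z' ω = m' ∧ V z ω = v ∧ V z' ω = q.2 ∧ Z ω = z}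
            ∩ {ω | C ω = c} := by
      ext ω
      simp only [Set.mem_inter_iff, Set.mem_setOf_eq, Set.mem_preimage, Prod.ext_iff]
      tauto
    have e2 : Y z m' ⁻¹' A ∩ {ω | M z' ω = m' ∧ V z ω = v ∧ C ω = c}
          ∩ {ω | (M z ω, V z' ω) = q}
        = {ω | Y z m' ω ∈ A ∧ M z ω = q.1 ∧ M z' ω = m' ∧ V z ω = v ∧ V z' ω = q.2}
            ∩ {ω | C ω = c} := by
      ext ω
      simp only [Set.mem_inter_iff, Set.mem_setOf_eq, Set.mem_preimage, Prod.ext_iff]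
      tauto
    rw [e1, e2]
    exact h
  -- Assumption 2, cleared and marginalized
  have a2c : ∀ (m : ℳ) (A : Set ℝ), MeasurableSet A → ∀ m₁ m₂ : ℳ,
      (P ({ω | Y z m ω ∈ A ∧ M z ω = m₁ ∧ M z' ω = m₂}
            ∩ {ω | V z ω = v ∧ Z ω = z ∧ C ω = c})).toReal
          * (P {ω | V z ω = v ∧ Z ω = z ∧ C ω = c}).toReal
        = (P ({ω | Y z m ω ∈ A} ∩ {ω | V z ω = v ∧ Z ω = z ∧ C ω = c})).toReal
          * (P ({ω | M z ω = m₁ ∧ M z' ω = m₂}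
              ∩ {ω | V z ω = v ∧ Z ω = z ∧ C ω = c})).toReal :=
    fun m A hA m₁ m₂ => cProb_clear P hpB (h2 z z' m v c hpos A hA m₁ m₂)
  have key2T : ∀ (m' : ℳ) (A : Set ℝ), MeasurableSet A →
      (P (Y z m' ⁻¹' A ∩ {ω | M z' ω = m' ∧ V z ω = v ∧ Z ω = z ∧ C ω = c})).toReal
          * (P {ω | V z ω = v ∧ Z ω = z ∧ C ω = c}).toReal
        = (P (Y z m' ⁻¹' A ∩ {ω | V z ω = v ∧ Z ω = z ∧ C ω = c})).toReal
          * (P {ω | M z' ω = m' ∧ V z ω = v ∧ Z ω = z ∧ C ω = c}).toReal := by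
    intro m' A hA
    rw [fiberSum_measure P (hM z) ((hYmeas z m' hA).inter (msTz m')),
      fiberSum_measure P (hM z) (msTz m'), Finset.sum_mul, Finset.mul_sum]
    refine Finset.sum_congr rfl fun m₁ _ => ?_
    have h := a2c m' A hA m₁ m'
    have e1 : Y z m' ⁻¹' A ∩ {ω | M z' ω = m' ∧ V z ω = v ∧ Z ω = z ∧ C ω = c}
          ∩ {ω | M z ω = m₁}
        = {ω | Y z m' ω ∈ A ∧ M z ω = m₁ ∧ M z' ω = m'}
            ∩ {ω | V z ω = v ∧ Z ω = z ∧ C ω = c} := by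
      ext ω
      simp only [Set.mem_inter_iff, Set.mem_setOf_eq, Set.mem_preimage]
      tauto
    have e2 : {ω | M z' ω = m' ∧ V z ω = v ∧ Z ω = z ∧ C ω = c} ∩ {ω | M z ω = m₁}
        = {ω | M z ω = m₁ ∧ M z' ω = m'} ∩ {ω | V z ω = v ∧ Z ω = z ∧ C ω = c} := by
      ext ω
      simp only [Set.mem_inter_iff, Set.mem_setOf_eq]
      tauto
    rw [e1, e2]
    exact h
  have key2D : ∀ (m' : ℳ) (A : Set ℝ), MeasurableSet A →
      (P (Y z m' ⁻¹' A ∩ {ω | M z ω = m' ∧ V z ω = v ∧ Z ω = z ∧ C ω = c})).toReal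
          * (P {ω | V z ω = v ∧ Z ω = z ∧ C ω = c}).toReal
        = (P (Y z m' ⁻¹' A ∩ {ω | V z ω = v ∧ Z ω = z ∧ C ω = c})).toReal
          * (P {ω | M z ω = m' ∧ V z ω = v ∧ Z ω = z ∧ C ω = c}).toReal := by
    intro m' A hA
    rw [fiberSum_measure P (hM z') ((hYmeas z m' hA).inter (msD m')),
      fiberSum_measure P (hM z') (msD m'), Finset.sum_mul, Finset.mul_sum]
    refine Finset.sum_congr rfl fun m₂ _ => ?_
    have h := a2c m' A hA m' m₂
    have e1 : Y z m' ⁻¹' A ∩ {ω | M z ω = m' ∧ V z ω = v ∧ Z ω = z ∧ C ω = c}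
          ∩ {ω | M z' ω = m₂}
        = {ω | Y z m' ω ∈ A ∧ M z ω = m' ∧ M z' ω = m₂}
            ∩ {ω | V z ω = v ∧ Z ω = z ∧ C ω = c} := by
      ext ω
      simp only [Set.mem_inter_iff, Set.mem_setOf_eq, Set.mem_preimage]
      tauto
    have e2 : {ω | M z ω = m' ∧ V z ω = v ∧ Z ω = z ∧ C ω = c} ∩ {ω | M z' ω = m₂}
        = {ω | M z ω = m' ∧ M z' ω = m₂} ∩ {ω | V z ω = v ∧ Z ω = z ∧ C ω = c} := by
      ext ω
      simp only [Set.mem_inter_iff, Set.mem_setOf_eq]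
      tauto
    rw [e1, e2]
    exact h
  -- Assumption 3, cleared
  have a3c : ∀ (m' : ℳ) (v' : 𝒱),
      (P ({ω | M z' ω = m' ∧ V z ω = v}
            ∩ {ω | V z' ω = v' ∧ Z ω = z' ∧ C ω = c})).toReal
          * (P {ω | V z' ω = v' ∧ Z ω = z' ∧ C ω = c}).toReal
        = (P {ω | M z' ω = m' ∧ V z' ω = v' ∧ Z ω = z' ∧ C ω = c}).toReal
          * (P {ω | V z ω = v ∧ V z' ω = v' ∧ Z ω = z' ∧ C ω = c}).toReal :=
    fun m' v' => cProb_clear P (hpB' v') (h3 v' c (hpos' v') m' v)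
  -- cross-world transport of the joint (V_z, V_z', M_z') law between arms
  have crossE : ∀ (m' : ℳ) (v' : 𝒱),
      (P {ω | M z' ω = m' ∧ V z ω = v ∧ V z' ω = v' ∧ Z ω = z ∧ C ω = c}).toReal
          * (P {ω | Z ω = z' ∧ C ω = c}).toReal
        = (P {ω | M z' ω = m' ∧ V z ω = v ∧ V z' ω = v' ∧ Z ω = z' ∧ C ω = c}).toReal
          * (P {ω | Z ω = z ∧ C ω = c}).toReal := by
    intro m' v'
    apply mul_right_cancel₀ hg.ne'
    linear_combination (P {ω | Z ω = z' ∧ C ω = c}).toReal * keyE m' v' z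
      - (P {ω | Z ω = z ∧ C ω = c}).toReal * keyE m' v' z'
  have crossF : ∀ v' : 𝒱,
      (P {ω | V z ω = v ∧ V z' ω = v' ∧ Z ω = z ∧ C ω = c}).toReal
          * (P {ω | Z ω = z' ∧ C ω = c}).toReal
        = (P {ω | V z ω = v ∧ V z' ω = v' ∧ Z ω = z' ∧ C ω = c}).toReal
          * (P {ω | Z ω = z ∧ C ω = c}).toReal := by
    intro v'
    apply mul_right_cancel₀ hg.ne'
    linear_combination (P {ω | Z ω = z' ∧ C ω = c}).toReal * keyF v' z
      - (P {ω | Z ω = z ∧ C ω = c}).toReal * keyF v' z'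
  -- the key cross-world factorization (‡)
  have sharp : ∀ (m' : ℳ) (v' : 𝒱),
      (P {ω | M z' ω = m' ∧ V z ω = v ∧ V z' ω = v' ∧ Z ω = z ∧ C ω = c}).toReal
          * (P {ω | V z' ω = v' ∧ Z ω = z' ∧ C ω = c}).toReal
        = (P {ω | M z' ω = m' ∧ V z' ω = v' ∧ Z ω = z' ∧ C ω = c}).toReal
          * (P {ω | V z ω = v ∧ V z' ω = v' ∧ Z ω = z ∧ C ω = c}).toReal := by
    intro m' v'
    have hA3 := a3c m' v'
    have e1 : {ω | M z' ω = m' ∧ V z ω = v} ∩ {ω | V z' ω = v' ∧ Z ω = z' ∧ C ω = c}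
        = {ω | M z' ω = m' ∧ V z ω = v ∧ V z' ω = v' ∧ Z ω = z' ∧ C ω = c} := by
      ext ω; simp only [Set.mem_inter_iff, Set.mem_setOf_eq]; tauto
    rw [e1] at hA3
    apply mul_right_cancel₀ hqz'.ne'
    linear_combination (P {ω | V z' ω = v' ∧ Z ω = z' ∧ C ω = c}).toReal * crossE m' v'
      - (P {ω | M z' ω = m' ∧ V z' ω = v' ∧ Z ω = z' ∧ C ω = c}).toReal * crossF v'
      + (P {ω | Z ω = z ∧ C ω = c}).toReal * hA3
  -- integral (expectation) versions
  have intT1 : ∀ m' : ℳ,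
      ∫ ω in {ω | M z' ω = m' ∧ V z ω = v ∧ Z ω = z ∧ C ω = c}, Y z m' ω ∂P
        = ((P {ω | Z ω = z ∧ C ω = c}).toReal / (P {ω | C ω = c}).toReal)
          * ∫ ω in {ω | M z' ω = m' ∧ V z ω = v ∧ C ω = c}, Y z m' ω ∂P := by
    intro m'
    refine integral_eq_of_fibers P (hYmeas z m') (div_nonneg hqz.le hg.le) fun A hA => ?_
    have h := keyA m' A hA
    rw [div_mul_eq_mul_div, eq_div_iff hg.ne']
    linarith
  have intT2 : ∀ m' : ℳ,
      ∫ ω in {ω | M z' ω = m' ∧ V z ω = v ∧ Z ω = z ∧ C ω = c}, Y z m' ω ∂P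
        = ((P {ω | M z' ω = m' ∧ V z ω = v ∧ Z ω = z ∧ C ω = c}).toReal
            / (P {ω | V z ω = v ∧ Z ω = z ∧ C ω = c}).toReal)
          * ∫ ω in {ω | V z ω = v ∧ Z ω = z ∧ C ω = c}, Y z m' ω ∂P := by
    intro m'
    refine integral_eq_of_fibers P (hYmeas z m')
      (div_nonneg ENNReal.toReal_nonneg hpB.le) fun A hA => ?_
    have h := key2T m' A hA
    rw [div_mul_eq_mul_div, eq_div_iff hpB.ne']
    linarith
  have intD : ∀ m' : ℳ,
      ∫ ω in {ω | M z ω = m' ∧ V z ω = v ∧ Z ω = z ∧ C ω = c}, Y z m' ω ∂P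
        = ((P {ω | M z ω = m' ∧ V z ω = v ∧ Z ω = z ∧ C ω = c}).toReal
            / (P {ω | V z ω = v ∧ Z ω = z ∧ C ω = c}).toReal)
          * ∫ ω in {ω | V z ω = v ∧ Z ω = z ∧ C ω = c}, Y z m' ω ∂P := by
    intro m'
    refine integral_eq_of_fibers P (hYmeas z m')
      (div_nonneg ENNReal.toReal_nonneg hpB.le) fun A hA => ?_
    have h := key2D m' A hA
    rw [div_mul_eq_mul_div, eq_div_iff hpB.ne']
    linarith
  -- integrability of the composite outcome
  have hGint : Integrable (fun ω => Y z (M z' ω) ω) P := by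
    have hfe : (fun ω => Y z (M z' ω) ω)
        = fun ω => ∑ m : ℳ, if M z' ω = m then Y z m ω else 0 := by
      funext ω; simp
    rw [hfe]
    apply integrable_finset_sum
    intro m _
    have hind : (fun ω => if M z' ω = m then Y z m ω else 0)
        = Set.indicator {ω | M z' ω = m} (Y z m) := by
      funext ω; by_cases h : M z' ω = m <;> simp [Set.indicator, h]
    rw [hind]
    exact (hYint z m).indicator (hM z' (measurableSet_singleton m))
  -- step 1 : decompose the cross-world integral over the value of M_{z'}
  have step1 : ∫ ω in {ω | V z ω = v ∧ C ω = c}, Y z (M z' ω) ω ∂P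
      = ∑ m' : ℳ, ∫ ω in {ω | M z' ω = m' ∧ V z ω = v ∧ C ω = c}, Y z m' ω ∂P := by
    rw [fiberSum_integral P (hM z') msU hGint]
    refine Finset.sum_congr rfl fun m' _ => ?_
    have e : {ω | V z ω = v ∧ C ω = c} ∩ {ω | M z' ω = m'}
        = {ω | M z' ω = m' ∧ V z ω = v ∧ C ω = c} := by
      ext ω; simp only [Set.mem_inter_iff, Set.mem_setOf_eq]; tauto
    rw [e]
    refine setIntegral_congr_fun (msT m') fun ω hω => ?_
    obtain ⟨hm, -, -⟩ := hω
    rw [hm]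
  -- decompose P(Tz) over the value of V_{z'}
  have hTzE : ∀ m' : ℳ,
      (P {ω | M z' ω = m' ∧ V z ω = v ∧ Z ω = z ∧ C ω = c}).toReal
        = ∑ v' : 𝒱,
            (P {ω | M z' ω = m' ∧ V z ω = v ∧ V z' ω = v' ∧ Z ω = z ∧ C ω = c}).toReal := by
    intro m'
    rw [fiberSum_measure P (hV z') (msTz m')]
    refine Finset.sum_congr rfl fun v' _ => ?_
    refine congrArg (fun S => (P S).toReal) ?_
    ext ω; simp only [Set.mem_inter_iff, Set.mem_setOf_eq]; tauto
  -- the fraction identity (†)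
  have hTfrac : ∀ m' : ℳ,
      (P {ω | M z' ω = m' ∧ V z ω = v ∧ Z ω = z ∧ C ω = c}).toReal
          / (P {ω | V z ω = v ∧ Z ω = z ∧ C ω = c}).toReal
        = ∑ v' : 𝒱,
            ((P {ω | M z' ω = m' ∧ V z' ω = v' ∧ Z ω = z' ∧ C ω = c}).toReal
              / (P {ω | V z' ω = v' ∧ Z ω = z' ∧ C ω = c}).toReal)
            * ((P {ω | V z ω = v ∧ V z' ω = v' ∧ Z ω = z ∧ C ω = c}).toReal
              / (P {ω | V z ω = v ∧ Z ω = z ∧ C ω = c}).toReal) := by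
    intro m'
    rw [hTzE m', Finset.sum_div]
    refine Finset.sum_congr rfl fun v' _ => ?_
    rw [div_mul_div_comm, div_eq_div_iff hpB.ne' (mul_pos (hpB' v') hpB).ne']
    linear_combination (P {ω | V z ω = v ∧ Z ω = z ∧ C ω = c}).toReal * sharp m' v'
  -- main identity, in terms of potential quantities
  have main : (∫ ω in {ω | V z ω = v ∧ C ω = c}, Y z (M z' ω) ω ∂P)
        / (P {ω | V z ω = v ∧ C ω = c}).toReal
      = ∑ m' : ℳ,
          ((∫ ω in {ω | M z ω = m' ∧ V z ω = v ∧ Z ω = z ∧ C ω = c}, Y z m' ω ∂P)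
            / (P {ω | M z ω = m' ∧ V z ω = v ∧ Z ω = z ∧ C ω = c}).toReal)
          * ((P {ω | M z' ω = m' ∧ V z ω = v ∧ Z ω = z ∧ C ω = c}).toReal
            / (P {ω | V z ω = v ∧ Z ω = z ∧ C ω = c}).toReal) := by
    have hU : (P {ω | V z ω = v ∧ C ω = c}).toReal
        = (P {ω | V z ω = v ∧ Z ω = z ∧ C ω = c}).toReal * (P {ω | C ω = c}).toReal
          / (P {ω | Z ω = z ∧ C ω = c}).toReal := div_solve hqz (keyU z)
    rw [step1, hU, Finset.sum_div]
    refine Finset.sum_congr rfl fun m' _ => ?_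
    exact frac_chain hg hqz hpB (hpD m') (intT1 m') (intT2 m') (intD m')
  -- conversion of observed quantities and final assembly
  have eqVB : ∀ v' : 𝒱, {ω | V z' ω = v'} ∩ {ω | V z ω = v ∧ Z ω = z ∧ C ω = c}
      = {ω | V z ω = v ∧ V z' ω = v' ∧ Z ω = z ∧ C ω = c} := by
    intro v'; ext ω; simp only [Set.mem_inter_iff, Set.mem_setOf_eq]; tauto
  unfold cExp cProb
  rw [main]
  calc ∑ m' : ℳ,
        ((∫ ω in {ω | M z ω = m' ∧ V z ω = v ∧ Z ω = z ∧ C ω = c}, Y z m' ω ∂P)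
          / (P {ω | M z ω = m' ∧ V z ω = v ∧ Z ω = z ∧ C ω = c}).toReal)
        * ((P {ω | M z' ω = m' ∧ V z ω = v ∧ Z ω = z ∧ C ω = c}).toReal
          / (P {ω | V z ω = v ∧ Z ω = z ∧ C ω = c}).toReal)
      = ∑ m' : ℳ, ∑ v' : 𝒱,
          ((∫ ω in {ω | M z ω = m' ∧ V z ω = v ∧ Z ω = z ∧ C ω = c}, Y z m' ω ∂P)
            / (P {ω | M z ω = m' ∧ V z ω = v ∧ Z ω = z ∧ C ω = c}).toReal)
          * (((P {ω | M z' ω = m' ∧ V z' ω = v' ∧ Z ω = z' ∧ C ω = c}).toReal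
              / (P {ω | V z' ω = v' ∧ Z ω = z' ∧ C ω = c}).toReal)
            * ((P {ω | V z ω = v ∧ V z' ω = v' ∧ Z ω = z ∧ C ω = c}).toReal
              / (P {ω | V z ω = v ∧ Z ω = z ∧ C ω = c}).toReal)) := by
        refine Finset.sum_congr rfl fun m' _ => ?_
        rw [hTfrac m', Finset.mul_sum]
    _ = ∑ v' : 𝒱, ∑ m' : ℳ,
          ((∫ ω in {ω | M z ω = m' ∧ V z ω = v ∧ Z ω = z ∧ C ω = c}, Y z m' ω ∂P)
            / (P {ω | M z ω = m' ∧ V z ω = v ∧ Z ω = z ∧ C ω = c}).toReal)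
          * (((P {ω | M z' ω = m' ∧ V z' ω = v' ∧ Z ω = z' ∧ C ω = c}).toReal
              / (P {ω | V z' ω = v' ∧ Z ω = z' ∧ C ω = c}).toReal)
            * ((P {ω | V z ω = v ∧ V z' ω = v' ∧ Z ω = z ∧ C ω = c}).toReal
              / (P {ω | V z ω = v ∧ Z ω = z ∧ C ω = c}).toReal)) := Finset.sum_comm
    _ = ∑ v' : 𝒱, ∑ m' : ℳ,
          ((∫ ω in {ω | Mobs ω = m' ∧ Vobs ω = v ∧ Z ω = z ∧ C ω = c}, Yobs ω ∂P)
            / (P {ω | Mobs ω = m' ∧ Vobs ω = v ∧ Z ω = z ∧ C ω = c}).toReal)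
          * ((P ({ω | Mobs ω = m'} ∩ {ω | Vobs ω = v' ∧ Z ω = z' ∧ C ω = c})).toReal
            / (P {ω | Vobs ω = v' ∧ Z ω = z' ∧ C ω = c}).toReal)
          * ((P ({ω | V z' ω = v'} ∩ {ω | V z ω = v ∧ Z ω = z ∧ C ω = c})).toReal
            / (P {ω | V z ω = v ∧ Z ω = z ∧ C ω = c}).toReal) := by
        refine Finset.sum_congr rfl fun v' _ => Finset.sum_congr rfl fun m' _ => ?_
        have hInt : ∫ ω in {ω | M z ω = m' ∧ V z ω = v ∧ Z ω = z ∧ C ω = c}, Yobs ω ∂P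
            = ∫ ω in {ω | M z ω = m' ∧ V z ω = v ∧ Z ω = z ∧ C ω = c}, Y z m' ω ∂P := by
          refine setIntegral_congr_fun (msD m') fun ω hω => ?_
          obtain ⟨hm, -, hzz, -⟩ := hω
          rw [hYc ω, hzz, hm]
        rw [eqMB' m' v', eqB' v', eqD m', hInt, eqVB v']
        ring
end
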